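/- arXiv:2002.10300 — 6 statements merged into one kernel-verified Lean document; each statement's English description precedes it below -/
import Mathlib

section
/- Let H be a division ring and n ≥ 2. Let P = H_c[t₁,…,t_n] be the iterated polynomial ring in n central variables over H, and view Q = H_c[t₁,…,t_{n-1}] as the subring of constant polynomials in P. Let F be a division ring that is a classical right quotient ring of P via an injective ring homomorphism φ : P → F. Set E = {φ(f)·φ(g)⁻¹ : f, g ∈ Q, g ≠ 0}. Then E is the underlying set of a division subring of F, and F is a classical right quotient ring of the subring of F generated by E together with φ(t_n) (where t_n denotes the polynomial variable of P over Q). -/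
universe u v w x

/-- The subgroup of ring automorphisms of `M` fixing the image of `ι` pointwise
(the Galois group of the extension `M/F` given by `ι`). -/
def fixingAut {F M : Type*} [DivisionRing F] [DivisionRing M] (ι : F →+* M) :
    Subgroup (RingAut M) where
  carrier := {σ | ∀ x : F, σ (ι x) = ι x}
  one_mem' := fun _ => rfl
  mul_mem' := by
    intro a b ha hb x
    show a (b (ι x)) = ι x
    rw [hb x, ha x]
  inv_mem' := by
    intro a ha x
    show a.symm (ι x) = ι x
    conv_lhs => rw [← ha x]
    exact a.symm_apply_apply _

/-- The extension `M/F` given by `ι : F →+* M` is Galois: every element of `M` fixed by all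
ring automorphisms of `M` fixing `ι(F)` pointwise lies in `ι(F)`. -/
def IsGaloisExt {F M : Type*} [DivisionRing F] [DivisionRing M] (ι : F →+* M) : Prop :=
  ∀ m : M, (∀ σ ∈ fixingAut ι, σ m = m) → m ∈ Set.range ι

/-- The ring `H[X]` of polynomial functions on a division ring `H`: the subring of `H → H`
(with pointwise operations) generated by the constant functions and the identity function. -/
def polyFunRing (H : Type*) [DivisionRing H] : Subring (H → H) :=
  Subring.closure ({f | ∃ c : H, f = Function.const H c} ∪ {id})

/-- `F` is a classical right quotient ring of `R` via the injective ring homomorphism `φ`: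
every element of `F` is of the form `φ a * (φ b)⁻¹` with `b ≠ 0`. -/
def IsClassicalRightQuotient {R F : Type*} [Ring R] [DivisionRing F] (φ : R →+* F) : Prop :=
  Function.Injective φ ∧ ∀ x : F, ∃ a b : R, b ≠ 0 ∧ x = φ a * (φ b)⁻¹

/-- Auxiliary construction for the iterated polynomial ring. -/
noncomputable def IterPolyAux (H : Type u) [Ring H] : ℕ → ((T : Type u) × Ring T)
  | 0 => ⟨H, inferInstance⟩
  | n + 1 =>
    letI := (IterPolyAux H n).2
    ⟨Polynomial (IterPolyAux H n).1, inferInstance⟩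

/-- The iterated polynomial ring `H_c[t₁, …, t_n]` in `n` central variables over `H`:
`IterPoly H 0 = H` and `IterPoly H (n + 1) = Polynomial (IterPoly H n)`. -/
def IterPoly (H : Type u) [Ring H] (n : ℕ) : Type u := (IterPolyAux H n).1

noncomputable instance (H : Type u) [Ring H] (n : ℕ) : Ring (IterPoly H n) :=
  (IterPolyAux H n).2


theorem iterPoly_isDomain (H : Type u) [DivisionRing H] : ∀ n, IsDomain (IterPoly H n)
  | 0 => inferInstanceAs (IsDomain H)
  | n + 1 => by
      haveI := iterPoly_isDomain H n
      exact inferInstanceAs (IsDomain (Polynomial (IterPoly H n)))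

/-- Here the total number of central variables is `m + 1 ≥ 2`, the subring
`Q` of constant polynomials being `IterPoly H m` embedded via `Polynomial.C`, and `t_n`
being `Polynomial.X`. -/
theorem quotients_of_coefficients_form_division_subring
    {H : Type u} [DivisionRing H] (m : ℕ) (hm : 1 ≤ m)
    {F : Type v} [DivisionRing F]
    (φ : Polynomial (IterPoly H m) →+* F) (hφ : IsClassicalRightQuotient φ) :
    (∃ S : Subring F,
      (S : Set F) = {x | ∃ f g : IterPoly H m,
          g ≠ 0 ∧ x = φ (Polynomial.C f) * (φ (Polynomial.C g))⁻¹} ∧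
      ∀ x ∈ S, x⁻¹ ∈ S) ∧
    (∀ x : F, ∃ a b : Subring.closure
        ({x | ∃ f g : IterPoly H m,
            g ≠ 0 ∧ x = φ (Polynomial.C f) * (φ (Polynomial.C g))⁻¹} ∪
          {φ Polynomial.X}),
      b ≠ 0 ∧ x = (a : F) * (b : F)⁻¹) := by
  haveI : IsDomain (IterPoly H m) := iterPoly_isDomain H m
  obtain ⟨hinj, hquot⟩ := hφ
  set Q := IterPoly H m with hQ
  set ψ : Q →+* F := φ.comp Polynomial.C with hψdef
  have hψC : ∀ a : Q, ψ a = φ (Polynomial.C a) := fun a => rfl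
  have hψinj : Function.Injective ψ := hinj.comp Polynomial.C_injective
  have hψne : ∀ {b : Q}, b ≠ 0 → ψ b ≠ 0 := fun {b} hb h =>
    hb (hψinj (h.trans (map_zero ψ).symm))
  have hφne : ∀ {q : Polynomial Q}, q ≠ 0 → φ q ≠ 0 := fun {q} hq h =>
    hq (hinj (h.trans (map_zero φ).symm))
  -- The right Ore condition for `Q` inside `F`.
  have ore : ∀ a b : Q, b ≠ 0 → ∃ a₁ b₁ : Q, b₁ ≠ 0 ∧ a * b₁ = b * a₁ := by
    intro a b hb
    obtain ⟨p, q, hq, hx⟩ := hquot ((ψ b)⁻¹ * ψ a)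
    have hb' : ψ b ≠ 0 := hψne hb
    have hq' : φ q ≠ 0 := hφne hq
    have h1 : ψ a = ψ b * (φ p * (φ q)⁻¹) := by
      rw [← hx, ← mul_assoc, mul_inv_cancel₀ hb', one_mul]
    have h2 : ψ a * φ q = ψ b * φ p := by
      rw [h1, mul_assoc, mul_assoc, inv_mul_cancel₀ hq', mul_one]
    have key : Polynomial.C a * q = Polynomial.C b * p := by
      apply hinj
      rw [map_mul, map_mul]
      exact h2
    have hco : a * q.coeff q.natDegree = b * p.coeff q.natDegree := by
      have := congrArg (fun r => Polynomial.coeff r q.natDegree) key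
      simpa [Polynomial.coeff_C_mul] using this
    exact ⟨p.coeff q.natDegree, q.coeff q.natDegree,
      Polynomial.leadingCoeff_ne_zero.mpr hq, hco⟩
  -- the Ore condition phrased in `F`
  have oreF : ∀ a b : Q, b ≠ 0 → ∃ a₁ b₁ : Q, b₁ ≠ 0 ∧
      (ψ b)⁻¹ * ψ a = ψ a₁ * (ψ b₁)⁻¹ := by
    intro a b hb
    obtain ⟨a₁, b₁, hb₁, h⟩ := ore a b hb
    refine ⟨a₁, b₁, hb₁, ?_⟩
    have hF : ψ a * ψ b₁ = ψ b * ψ a₁ := by rw [← map_mul, ← map_mul, h]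
    have hb' : ψ b ≠ 0 := hψne hb
    have hb₁' : ψ b₁ ≠ 0 := hψne hb₁
    rw [inv_mul_eq_iff_eq_mul₀ hb', ← mul_assoc, eq_comm,
      mul_inv_eq_iff_eq_mul₀ hb₁']
    exact hF.symm
  set E : Set F := {x | ∃ f g : Q,
      g ≠ 0 ∧ x = φ (Polynomial.C f) * (φ (Polynomial.C g))⁻¹} with hE
  have memE : ∀ {f g : Q}, g ≠ 0 → ψ f * (ψ g)⁻¹ ∈ E := fun {f g} hg => ⟨f, g, hg, rfl⟩
  have one_memE : (1 : F) ∈ E := ⟨1, 1, one_ne_zero, by simp⟩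
  have zero_memE : (0 : F) ∈ E := ⟨0, 1, one_ne_zero, by simp⟩
  have mul_memE : ∀ {x y : F}, x ∈ E → y ∈ E → x * y ∈ E := by
    rintro x y ⟨a, b, hb, rfl⟩ ⟨c, d, hd, rfl⟩
    obtain ⟨c₁, b₁, hb₁, hEq⟩ := oreF c b hb
    have hdb₁ : d * b₁ ≠ 0 := mul_ne_zero hd hb₁
    have : ψ a * (ψ b)⁻¹ * (ψ c * (ψ d)⁻¹) = ψ (a * c₁) * (ψ (d * b₁))⁻¹ := by
      rw [map_mul, map_mul, mul_inv_rev]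
      calc ψ a * (ψ b)⁻¹ * (ψ c * (ψ d)⁻¹)
          = ψ a * ((ψ b)⁻¹ * ψ c) * (ψ d)⁻¹ := by rw [mul_assoc, mul_assoc, mul_assoc]
        _ = ψ a * (ψ c₁ * (ψ b₁)⁻¹) * (ψ d)⁻¹ := by rw [hEq]
        _ = ψ a * ψ c₁ * ((ψ b₁)⁻¹ * (ψ d)⁻¹) := by rw [mul_assoc, mul_assoc, mul_assoc]
    rw [hψC a, hψC b, hψC c, hψC d] at this
    rw [this]
    exact memE hdb₁
  have add_memE : ∀ {x y : F}, x ∈ E → y ∈ E → x + y ∈ E := by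
    rintro x y ⟨a, b, hb, rfl⟩ ⟨c, d, hd, rfl⟩
    obtain ⟨b₁, d₁, hd₁, hEq⟩ := ore b d hd
    -- b * d₁ = d * b₁, common denominator, nonzero
    have hbd₁ : b * d₁ ≠ 0 := mul_ne_zero hb hd₁
    have hb₁ : b₁ ≠ 0 := by
      intro h
      rw [h, mul_zero] at hEq
      exact hbd₁ hEq
    have hx : φ (Polynomial.C a) * (φ (Polynomial.C b))⁻¹
        = ψ (a * d₁) * (ψ (b * d₁))⁻¹ := by
      rw [← hψC, ← hψC, map_mul, map_mul, mul_inv_rev, ← mul_assoc,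
        mul_assoc (ψ a) (ψ d₁), mul_inv_cancel₀ (hψne hd₁), mul_one]
    have hy : φ (Polynomial.C c) * (φ (Polynomial.C d))⁻¹
        = ψ (c * b₁) * (ψ (b * d₁))⁻¹ := by
      rw [hEq, ← hψC, ← hψC, map_mul, map_mul, mul_inv_rev, ← mul_assoc,
        mul_assoc (ψ c) (ψ b₁), mul_inv_cancel₀ (hψne hb₁), mul_one]
    rw [hx, hy, ← add_mul, ← map_add]
    exact memE hbd₁
  have neg_memE : ∀ {x : F}, x ∈ E → -x ∈ E := by
    rintro x ⟨a, b, hb, rfl⟩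
    refine ⟨-a, b, hb, ?_⟩
    rw [map_neg, map_neg, neg_mul]
  constructor
  · refine ⟨{ carrier := E,
              one_mem' := one_memE,
              mul_mem' := fun ha hb => mul_memE ha hb,
              zero_mem' := zero_memE,
              add_mem' := fun ha hb => add_memE ha hb,
              neg_mem' := fun ha => neg_memE ha }, rfl, ?_⟩
    rintro x ⟨a, b, hb, rfl⟩
    by_cases ha : a = 0
    · subst ha
      simp only [map_zero, zero_mul, inv_zero]
      exact zero_memE
    · have : (φ (Polynomial.C a) * (φ (Polynomial.C b))⁻¹)⁻¹
          = φ (Polynomial.C b) * (φ (Polynomial.C a))⁻¹ := by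
        rw [mul_inv_rev, inv_inv]
      rw [this]
      exact memE ha
  · intro x
    set T := Subring.closure (E ∪ {φ Polynomial.X}) with hT
    have hPT : ∀ p : Polynomial Q, φ p ∈ T := by
      intro p
      induction p using Polynomial.induction_on' with
      | add p q hp hq => rw [map_add]; exact add_mem hp hq
      | monomial n a =>
          have h1 : φ (Polynomial.C a) ∈ T :=
            Subring.subset_closure (Set.mem_union_left _ ⟨a, 1, one_ne_zero, by simp⟩)
          have h2 : φ Polynomial.X ∈ T :=
            Subring.subset_closure (Set.mem_union_right _ rfl)
          rw [← Polynomial.C_mul_X_pow_eq_monomial, map_mul, map_pow]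
          exact mul_mem h1 (pow_mem h2 n)
    obtain ⟨p, q, hq, hx⟩ := hquot x
    refine ⟨⟨φ p, hPT p⟩, ⟨φ q, hPT q⟩, ?_, hx⟩
    intro h
    exact hφne hq (by simpa using congrArg Subtype.val h)
end

section
/- Let H be a division ring with center k, let n be a positive integer, let P = H_c[t₁,…,t_n] be the iterated polynomial ring in n central variables over H, and let F be a division ring that is a classical right quotient ring of P via an injective ring homomorphism φ : P → F. Then the center of F equals the set {φ(f)·φ(g)⁻¹ : f, g elements of the center of P, g ≠ 0}. -/
universe u v w x

/-- key property -/
def HasCentralInBimod (R : Type*) [Ring R] : Prop :=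
  ∀ S : Set R, (∀ x ∈ S, ∀ y ∈ S, x + y ∈ S) →
    (∀ (r : R) (x), x ∈ S → r * x ∈ S) →
    (∀ (r : R) (x), x ∈ S → x * r ∈ S) →
    (∃ x ∈ S, x ≠ 0) →
    ∃ g ∈ S, g ≠ 0 ∧ g ∈ Subring.center R

lemma hasCentral_of_inv (R : Type*) [Ring R] [Nontrivial R]
    (hinv : ∀ x : R, x ≠ 0 → ∃ y : R, y * x = 1) : HasCentralInBimod R := by
  intro S _ hleft _ ⟨x, hxS, hx⟩
  obtain ⟨y, hy⟩ := hinv x hx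
  exact ⟨1, hy ▸ hleft y x hxS, one_ne_zero, Subring.mem_center_iff.mpr (by simp)⟩

open Polynomial in
lemma hasCentral_polynomial (R : Type*) [Ring R] (hR : HasCentralInBimod R) :
    HasCentralInBimod (Polynomial R) := by
  intro S hadd hleft hright ⟨p₀, hp₀S, hp₀⟩
  have hneg : ∀ x ∈ S, -x ∈ S := by
    intro x hx
    have := hleft (-1) x hx
    rwa [neg_one_mul] at this
  set D : Set ℕ := {k | ∃ p ∈ S, p ≠ 0 ∧ p.natDegree = k} with hD
  have hDne : D.Nonempty := ⟨p₀.natDegree, p₀, hp₀S, hp₀, rfl⟩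
  set d := sInf D with hdd
  obtain ⟨q₀, hq₀S, hq₀, hq₀d⟩ := Nat.sInf_mem hDne
  have hmin : ∀ p ∈ S, p ≠ 0 → d ≤ p.natDegree := fun p hp hp0 =>
    Nat.sInf_le ⟨p, hp, hp0, rfl⟩
  set L : Set R := {c | ∃ p ∈ S, p.natDegree ≤ d ∧ p.coeff d = c} with hL
  obtain ⟨c, ⟨p, hpS, hpd, hpc⟩, hc0, hccen⟩ := hR L
    (by
      rintro x ⟨p, hp, hpd, rfl⟩ y ⟨q, hq, hqd, rfl⟩
      exact ⟨p + q, hadd p hp q hq, le_trans (natDegree_add_le p q) (max_le hpd hqd),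
        coeff_add p q d⟩)
    (by
      rintro r x ⟨p, hp, hpd, rfl⟩
      exact ⟨C r * p, hleft _ _ hp, le_trans (natDegree_C_mul_le r p) hpd,
        coeff_C_mul p⟩)
    (by
      rintro r x ⟨p, hp, hpd, rfl⟩
      exact ⟨p * C r, hright _ _ hp, le_trans (natDegree_mul_C_le p r) hpd,
        coeff_mul_C p d r⟩)
    ⟨q₀.leadingCoeff, ⟨q₀, hq₀S, le_of_eq hq₀d, by rw [leadingCoeff, hq₀d]⟩,
      leadingCoeff_ne_zero.mpr hq₀⟩
  have hp0 : p ≠ 0 := fun h => hc0 (by simp [← hpc, h])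
  have hpdeq : p.natDegree = d :=
    le_antisymm hpd (le_natDegree_of_ne_zero (hpc ▸ hc0))
  -- p commutes with constants
  have hcomm : ∀ r : R, C r * p = p * C r := by
    intro r
    by_contra hne
    set q : R[X] := C r * p - p * C r with hq
    have hqS : q ∈ S := hadd _ (hleft _ _ hpS) _ (hneg _ (hright _ _ hpS))
    have hqne : q ≠ 0 := sub_ne_zero.mpr hne
    have hqle : q.natDegree < d := by
      rcases Nat.lt_or_ge q.natDegree d with h | h
      · exact h
      · exfalso
        apply leadingCoeff_ne_zero.mpr hqne
        rw [leadingCoeff]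
        rcases eq_or_lt_of_le h with h' | h'
        · rw [← h', hq, coeff_sub, coeff_C_mul, coeff_mul_C, hpc,
            Subring.mem_center_iff.mp hccen r, sub_self]
        · have h1 : p.natDegree < q.natDegree := hpdeq ▸ h'
          rw [hq, coeff_sub, coeff_C_mul, coeff_mul_C,
            coeff_eq_zero_of_natDegree_lt h1, mul_zero, zero_mul, sub_self]
    exact absurd (hmin q hqS hqne) (not_le.mpr hqle)
  have hpc_center : p ∈ Subring.center R[X] := by
    rw [Subring.mem_center_iff]
    intro g
    induction g using Polynomial.induction_on with
    | C a => exact (hcomm a).symm ▸ hcomm a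
    | add f g hf hg => rw [add_mul, mul_add, hf, hg]
    | monomial k a ih =>
      have hX : Commute X p := X_mul
      exact Commute.mul_left (hcomm a) (hX.pow_left (k + 1))
  exact ⟨p, hpS, hp0, hpc_center⟩

lemma hasCentral_iterPoly (H : Type u) [DivisionRing H] (n : ℕ) :
    HasCentralInBimod (IterPoly H n) := by
  induction n with
  | zero =>
    exact hasCentral_of_inv H (fun x hx => ⟨x⁻¹, inv_mul_cancel₀ hx⟩)
  | succ m ih =>
    exact hasCentral_polynomial (IterPoly H m) ih

theorem center_of_fraction_field_of_iterated_central_polynomials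
    {H : Type u} [DivisionRing H] (n : ℕ) (hn : 1 ≤ n)
    {F : Type v} [DivisionRing F]
    (φ : IterPoly H n →+* F) (hφ : IsClassicalRightQuotient φ) :
    (Subring.center F : Set F) =
      {x | ∃ f g : IterPoly H n, f ∈ Subring.center (IterPoly H n) ∧
        g ∈ Subring.center (IterPoly H n) ∧ g ≠ 0 ∧ x = φ f * (φ g)⁻¹} := by
  obtain ⟨hinj, hsurj⟩ := hφ
  have hφne : ∀ {b : IterPoly H n}, b ≠ 0 → φ b ≠ 0 := fun hb h =>
    hb (hinj (by rw [h, map_zero]))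
  ext x
  simp only [SetLike.mem_coe, Set.mem_setOf_eq]
  constructor
  · intro hx
    have hxc : ∀ y : F, y * x = x * y := Subring.mem_center_iff.mp hx
    obtain ⟨a, b, hb, hxab⟩ := hsurj x
    obtain ⟨g, hgS, hg0, hgc⟩ := hasCentral_iterPoly H n {s | x * φ s ∈ Set.range φ}
      (by rintro s ⟨t, ht⟩ s' ⟨t', ht'⟩
          exact ⟨t + t', by rw [map_add, map_add, mul_add, ht, ht']⟩)
      (by rintro r s ⟨t, ht⟩
          exact ⟨r * t, by rw [map_mul, map_mul, ← mul_assoc, ← hxc (φ r), mul_assoc, ht]⟩)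
      (by rintro r s ⟨t, ht⟩
          exact ⟨t * r, by rw [map_mul, map_mul, ← mul_assoc, ht]⟩)
      ⟨b, ⟨a, by rw [hxab, mul_assoc, inv_mul_cancel₀ (hφne hb), mul_one]⟩, hb⟩
    obtain ⟨f, hf⟩ := hgS
    refine ⟨f, g, ?_, hgc, hg0, ?_⟩
    · rw [Subring.mem_center_iff]
      intro r
      apply hinj
      rw [map_mul, map_mul, hf, ← mul_assoc, hxc (φ r), mul_assoc, ← map_mul,
        Subring.mem_center_iff.mp hgc r, map_mul, ← mul_assoc]
    · rw [eq_mul_inv_iff_mul_eq₀ (hφne hg0), hf]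
  · rintro ⟨f, g, hfc, hgc, hg0, rfl⟩
    have key : ∀ (h : IterPoly H n), h ∈ Subring.center (IterPoly H n) →
        ∀ y : F, Commute (φ h) y := by
      intro h hc y
      obtain ⟨a, b, hb, rfl⟩ := hsurj y
      have h1 : Commute (φ h) (φ a) := by
        show φ h * φ a = φ a * φ h
        rw [← map_mul, ← map_mul, Subring.mem_center_iff.mp hc a]
      have h2 : Commute (φ h) (φ b) := by
        show φ h * φ b = φ b * φ h
        rw [← map_mul, ← map_mul, Subring.mem_center_iff.mp hc b]
      exact h1.mul_right h2.inv_right₀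
    exact Subring.mem_center_iff.mpr fun y =>
      (Commute.mul_left (key f hfc y) ((key g hgc y).inv_left₀)).symm
end

section
/- Let H be a division ring with center k such that H has finite dimension d as a k-vector space. Let n be a positive integer, let P = H_c[t₁,…,t_n] be the iterated polynomial ring in n central variables over H, and let F be a division ring that is a classical right quotient ring of P via an injective ring homomorphism φ : P → F. Then the center Z(F) of F is a field and the dimension of F as a (left) vector space over Z(F) equals d. -/
universe u v w x

section Aux
open Polynomial


variable {R : Type*} [Ring R]

theorem mem_center_polynomial_iff {p : R[X]} :
    p ∈ Subring.center R[X] ↔ ∀ i, p.coeff i ∈ Subring.center R := by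
  constructor
  · intro hp i
    rw [Subring.mem_center_iff]
    intro r
    have h := (Subring.mem_center_iff.1 hp) (C r)
    have := congrArg (fun q => Polynomial.coeff q i) h
    simpa [coeff_C_mul, coeff_mul_C] using this
  · intro h
    rw [Subring.mem_center_iff]
    intro q
    induction q using Polynomial.induction_on' with
    | add f g hf hg => rw [add_mul, mul_add, hf, hg]
    | monomial n a =>
      have hC : C a * p = p * C a := by
        ext i
        rw [coeff_C_mul, coeff_mul_C]
        exact (Subring.mem_center_iff.1 (h i)) a
      rw [← C_mul_X_pow_eq_monomial, mul_assoc, X_pow_mul, ← mul_assoc, hC,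
        mul_assoc]

theorem center_coe_smul (z : Subring.center R) (x : R) : z • x = (↑z : R) * x := rfl

noncomputable def centerBasisPolynomial {ι : Type*} [Fintype ι]
    (B : Module.Basis ι (Subring.center R) R) : Module.Basis ι (Subring.center R[X]) R[X] := by
  refine Module.Basis.mk (v := fun j => C (B j)) ?_ ?_
  · rw [Fintype.linearIndependent_iff]
    intro g hg j
    have hcoef : ∀ (i : ℕ) j, ((g j : R[X]).coeff i) ∈ Subring.center R :=
      fun i j => mem_center_polynomial_iff.1 (g j).2 i
    have h2 : ∀ i : ℕ,
        ∑ j, (⟨(g j : R[X]).coeff i, hcoef i j⟩ : Subring.center R) • B j = 0 := by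
      intro i
      have h3 := congrArg (fun q : R[X] => q.coeff i) hg
      simpa [center_coe_smul, coeff_mul_C, finset_sum_coeff] using h3
    have h4 : ∀ i : ℕ, (g j : R[X]).coeff i = 0 := by
      intro i
      have := Fintype.linearIndependent_iff.1 B.linearIndependent _ (h2 i) j
      exact Subtype.ext_iff.1 this
    exact Subtype.ext (Polynomial.ext h4)
  · rintro p -
    rw [Submodule.mem_span_range_iff_exists_fun]
    have hm : ∀ (i : ℕ) (j : ι),
        (monomial i ((B.repr (p.coeff i) j : R)) : R[X]) ∈ Subring.center R[X] := by
      intro i j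
      rw [mem_center_polynomial_iff]
      intro m
      rw [coeff_monomial]
      split
      · exact SetLike.coe_mem _
      · exact Subring.zero_mem _
    refine ⟨fun j => ⟨∑ i ∈ p.support, monomial i ((B.repr (p.coeff i) j : R)),
      Subring.sum_mem _ fun i _ => hm i j⟩, ?_⟩
    ext m
    have hq : ∀ j : ι, (∑ i ∈ p.support, (monomial i ((B.repr (p.coeff i) j : R)) : R[X])).coeff m
        = (B.repr (p.coeff m) j : R) := by
      intro j
      rw [finset_sum_coeff]
      by_cases hms : m ∈ p.support
      · rw [Finset.sum_eq_single m]
        · rw [coeff_monomial, if_pos rfl]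
        · intro i _ hne; rw [coeff_monomial, if_neg hne]
        · intro h; exact absurd hms h
      · rw [Finset.sum_eq_zero, Polynomial.notMem_support_iff.1 hms]
        · simp
        · intro i hi
          rw [coeff_monomial, if_neg]
          rintro rfl; exact hms hi
    calc (∑ j, (⟨_, _⟩ : Subring.center R[X]) • C (B j)).coeff m
        = ∑ j, ((B.repr (p.coeff m) j : R)) * B j := by
          rw [finset_sum_coeff]
          refine Finset.sum_congr rfl fun j _ => ?_
          rw [center_coe_smul, coeff_mul_C, hq j]
      _ = p.coeff m := by
          conv_rhs => rw [← B.sum_repr (p.coeff m)]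
          rfl

theorem exists_central_mul {R : Type*} [Ring R] [Nontrivial R] [NoZeroDivisors R]
    {ι : Type*} [Fintype ι] (B : Module.Basis ι (Subring.center R) R)
    {b : R} (hb : b ≠ 0) : ∃ c : R, b * c ∈ Subring.center R ∧ b * c ≠ 0 := by
  haveI : IsDomain R := NoZeroDivisors.to_isDomain R
  haveI := Module.Free.of_basis B
  haveI := Module.Finite.of_basis B
  set C := Subring.center R with hC
  have hcomm : ∀ (z : C) (x : R), (↑z : R) * x = x * ↑z :=
    fun z x => (Subring.mem_center_iff.1 z.2 x).symm
  let f : R →ₗ[C] R := LinearMap.mulRight C b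
  set p := f.charpoly with hp
  have hp0 : p ≠ 0 := f.charpoly_monic.ne_zero
  set D := p.natDegree with hD
  set k := p.natTrailingDegree with hk
  have hkD : k ≤ D := p.natTrailingDegree_le_natDegree
  have hpk : p.coeff k ≠ 0 :=
    Polynomial.mem_support_iff.1 (Polynomial.natTrailingDegree_mem_support_of_nonzero hp0)
  have hE : ∑ i ∈ Finset.range (D + 1), (↑(p.coeff i) : R) * b ^ i = 0 := by
    have h1 : (Polynomial.aeval f p) (1 : R) = 0 := by
      rw [f.aeval_self_charpoly]; rfl
    rw [Polynomial.aeval_eq_sum_range] at h1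
    simpa [f, LinearMap.pow_mulRight, LinearMap.mulRight_apply, center_coe_smul, Subring.smul_def, smul_eq_mul] using h1
  have hE2 : b ^ k * (∑ i ∈ Finset.range (D + 1 - k), (↑(p.coeff (k + i)) : R) * b ^ i) = 0 := by
    rw [Finset.mul_sum]
    rw [Finset.range_eq_Ico, ← Finset.sum_Ico_consecutive _ (Nat.zero_le k)
      (Nat.le_succ_of_le hkD)] at hE
    have hz : ∑ i ∈ Finset.Ico 0 k, (↑(p.coeff i) : R) * b ^ i = 0 := by
      refine Finset.sum_eq_zero fun i hi => ?_
      rw [Polynomial.coeff_eq_zero_of_lt_natTrailingDegree (Finset.mem_Ico.1 hi).2]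
      simp
    rw [hz, zero_add, Finset.sum_Ico_eq_sum_range] at hE
    rw [← hE]
    refine Finset.sum_congr rfl fun i _ => ?_
    rw [← mul_assoc, ← hcomm, mul_assoc, ← pow_add]
  have hT : ∑ i ∈ Finset.range (D + 1 - k), (↑(p.coeff (k + i)) : R) * b ^ i = 0 :=
    (mul_eq_zero.1 hE2).resolve_left (pow_ne_zero k hb)
  have hDk : D + 1 - k = (D - k) + 1 := by omega
  rw [hDk, Finset.sum_range_succ'] at hT
  have hT2 : b * (∑ i ∈ Finset.range (D - k), (↑(p.coeff (k + (i + 1))) : R) * b ^ i)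
      + (↑(p.coeff k) : R) = 0 := by
    rw [← hT, Finset.mul_sum]
    congr 1
    · refine Finset.sum_congr rfl fun i _ => ?_
      rw [← mul_assoc, ← hcomm, mul_assoc, ← pow_succ']
    · simp
  have hbc : b * (-(∑ i ∈ Finset.range (D - k), (↑(p.coeff (k + (i + 1))) : R) * b ^ i))
      = (↑(p.coeff k) : R) := by
    rw [mul_neg, eq_neg_of_add_eq_zero_left hT2, neg_neg]
  refine ⟨-(∑ i ∈ Finset.range (D - k), (↑(p.coeff (k + (i + 1))) : R) * b ^ i), ?_, ?_⟩
  · rw [hbc]; exact SetLike.coe_mem _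
  · rw [hbc]
    simpa using hpk

theorem abstract_main {R : Type*} [Ring R] [Nontrivial R] [NoZeroDivisors R]
    {ι : Type*} [Fintype ι] (B : Module.Basis ι (Subring.center R) R)
    {F : Type*} [DivisionRing F] (φ : R →+* F) (hφ : IsClassicalRightQuotient φ) :
    IsField (Subring.center F) ∧ Module.finrank (Subring.center F) F = Fintype.card ι := by
  haveI : IsDomain R := NoZeroDivisors.to_isDomain R
  obtain ⟨hinj, hquot⟩ := hφ
  have hne : ∀ {c : R}, c ≠ 0 → φ c ≠ 0 := fun {c} hc h =>
    hc (hinj (h.trans (map_zero φ).symm))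
  -- φ maps central elements to central elements
  have hφc : ∀ z ∈ Subring.center R, φ z ∈ Subring.center F := by
    intro z hz
    rw [Subring.mem_center_iff]
    intro x
    obtain ⟨a, b', hb', rfl⟩ := hquot x
    have h1 : Commute (φ z) (φ a) := by
      unfold Commute SemiconjBy
      rw [← map_mul, ← map_mul, Subring.mem_center_iff.1 hz a]
    have h2 : Commute (φ z) (φ b') := by
      unfold Commute SemiconjBy
      rw [← map_mul, ← map_mul, Subring.mem_center_iff.1 hz b']
    exact (h1.mul_right h2.inv_right₀).eq.symm
  -- the center of F is closed under inverses
  have hinv : ∀ u ∈ Subring.center F, u⁻¹ ∈ Subring.center F := by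
    intro u hu
    rw [Subring.mem_center_iff]
    intro g
    exact (Commute.inv_right₀ (Subring.mem_center_iff.1 hu g)).eq
  -- every element of F has a representation with central denominator
  have hrep : ∀ x : F, ∃ a c : R, c ∈ Subring.center R ∧ c ≠ 0 ∧ x = φ a * (φ c)⁻¹ := by
    intro x
    obtain ⟨a, b', hb', rfl⟩ := hquot x
    obtain ⟨c', hmem, hne0⟩ := exists_central_mul B hb'
    have hc' : c' ≠ 0 := fun h => hne0 (by rw [h, mul_zero])
    refine ⟨a * c', b' * c', hmem, hne0, ?_⟩
    rw [map_mul, map_mul, mul_inv_rev, mul_assoc, ← mul_assoc (φ c'),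
      mul_inv_cancel₀ (hne hc'), one_mul]
  -- central elements of F have central numerator and denominator
  have hcen : ∀ z : Subring.center F, ∃ a c : R, a ∈ Subring.center R ∧
      c ∈ Subring.center R ∧ c ≠ 0 ∧ (z : F) = φ a * (φ c)⁻¹ := by
    intro z
    obtain ⟨a, c, hc, hc0, hz⟩ := hrep (z : F)
    have hφa : φ a = (z : F) * φ c := by
      rw [hz, mul_assoc, inv_mul_cancel₀ (hne hc0), mul_one]
    have hφa_mem : φ a ∈ Subring.center F := by
      rw [hφa]; exact mul_mem z.2 (hφc c hc)
    have ha : a ∈ Subring.center R := by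
      rw [Subring.mem_center_iff]
      intro g
      apply hinj
      rw [map_mul, map_mul]
      exact Subring.mem_center_iff.1 hφa_mem (φ g)
    exact ⟨a, c, ha, hc, hc0, hz⟩
  classical
  -- linear independence of φ ∘ B over the center of F
  have hli : LinearIndependent (Subring.center F) (fun j => φ (B j)) := by
    rw [Fintype.linearIndependent_iff]
    intro g hg j
    choose a c ha hc hc0 hrepr using fun j => hcen (g j)
    set cC : ι → Subring.center R := fun j => ⟨c j, hc j⟩ with hcC
    set e : Subring.center R := ∏ i, cC i with he
    set d : ι → Subring.center R := fun j => ∏ i ∈ Finset.univ.erase j, cC i with hd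
    have hed : ∀ j, (e : R) = c j * (d j : R) := by
      intro j
      rw [he, hd, ← Finset.mul_prod_erase Finset.univ cC (Finset.mem_univ j)]
      push_cast
      rfl
    have hd0 : ∀ j, (d j : R) ≠ 0 := by
      intro j h
      rw [hd] at h
      norm_cast at h
      rw [Finset.prod_eq_zero_iff] at h
      obtain ⟨i, -, hi⟩ := h
      exact hc0 i (by simpa [hcC, Subtype.ext_iff] using hi)
    have key : ∀ j, (g j : F) * φ (e : R) = φ (a j * (d j : R)) := by
      intro j
      rw [hrepr j, hed j, map_mul, map_mul, mul_assoc, ← mul_assoc ((φ (c j))⁻¹),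
        inv_mul_cancel₀ (hne (hc0 j)), one_mul]
    have hsum : φ (∑ j, (⟨a j * (d j : R),
        mul_mem (ha j) (SetLike.coe_mem (d j))⟩ : Subring.center R) • B j) = 0 := by
      rw [map_sum]
      have h1 : ∀ j, φ ((⟨a j * (d j : R), mul_mem (ha j) (SetLike.coe_mem (d j))⟩ :
          Subring.center R) • B j) = ((g j : F) * φ (B j)) * φ (e : R) := by
        intro j
        rw [center_coe_smul, map_mul, ← key j, mul_assoc,
          ← Subring.mem_center_iff.1 (hφc _ (SetLike.coe_mem e)) (φ (B j)), ← mul_assoc]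
      calc ∑ j, φ _ = (∑ j, (g j : F) * φ (B j)) * φ (e : R) := by
            rw [Finset.sum_mul]; exact Finset.sum_congr rfl fun j _ => h1 j
        _ = 0 := by
            have hg' : ∑ j, (g j : F) * φ (B j) = 0 := hg
            rw [hg', zero_mul]
    have hz : ∀ j', (⟨a j' * (d j' : R),
        mul_mem (ha j') (SetLike.coe_mem (d j'))⟩ : Subring.center R) = 0 := by
      have h0 := hinj (hsum.trans (map_zero φ).symm)
      exact Fintype.linearIndependent_iff.1 B.linearIndependent _ h0
    have hza : a j = 0 := by
      have := Subtype.ext_iff.1 (hz j)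
      simp only [ZeroMemClass.coe_zero] at this
      exact (mul_eq_zero.1 this).resolve_right (hd0 j)
    rw [Subtype.ext_iff, hrepr j, hza, map_zero, zero_mul]
    rfl
  -- spanning
  have hsp : ⊤ ≤ Submodule.span (Subring.center F) (Set.range fun j => φ (B j)) := by
    intro x _hx
    rw [Submodule.mem_span_range_iff_exists_fun]
    obtain ⟨a, c, hc, hc0, rfl⟩ := hrep x
    set zc : ι → Subring.center F := fun j => ⟨φ (B.repr a j : R) * (φ c)⁻¹,
      mul_mem (hφc _ (SetLike.coe_mem _)) (hinv _ (hφc c hc))⟩ with hzc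
    refine ⟨zc, ?_⟩
    have h1 : ∀ j, zc j • φ (B j) = φ ((B.repr a j : R) * B j) * (φ c)⁻¹ := by
      intro j
      show φ (B.repr a j : R) * (φ c)⁻¹ * φ (B j) = _
      rw [map_mul, mul_assoc, ← Subring.mem_center_iff.1 (hinv _ (hφc c hc)) (φ (B j)),
        ← mul_assoc]
    calc ∑ j, zc j • φ (B j) = (∑ j, φ ((B.repr a j : R) * B j)) * (φ c)⁻¹ := by
          rw [Finset.sum_mul]; exact Finset.sum_congr rfl fun j _ => h1 j
      _ = φ a * (φ c)⁻¹ := by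
          rw [← map_sum]
          congr 1
          apply congrArg
          conv_rhs => rw [← B.sum_repr a]
          rfl
  refine ⟨Field.toIsField _, ?_⟩
  rw [Module.finrank_eq_card_basis (Module.Basis.mk hli hsp)]

theorem iterNT (H : Type u) [DivisionRing H] :
    ∀ n, Nontrivial (IterPoly H n) ∧ NoZeroDivisors (IterPoly H n)
  | 0 => ⟨inferInstanceAs (Nontrivial H), inferInstanceAs (NoZeroDivisors H)⟩
  | n + 1 => by
    obtain ⟨h1, h2⟩ := iterNT H n
    exact ⟨inferInstanceAs (Nontrivial (Polynomial (IterPoly H n))),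
      inferInstanceAs (NoZeroDivisors (Polynomial (IterPoly H n)))⟩

noncomputable def iterBasis (H : Type u) [DivisionRing H]
    [FiniteDimensional (Subring.center H) H] (d : ℕ)
    (hd : Module.finrank (Subring.center H) H = d) :
    ∀ n, Module.Basis (Fin d) (Subring.center (IterPoly H n)) (IterPoly H n)
  | 0 => by exact (Module.finBasis (Subring.center H) H).reindex (finCongr hd)
  | n + 1 => by exact centerBasisPolynomial (R := IterPoly H n) (iterBasis H d hd n)

end Aux

theorem dim_over_center_of_fraction_field_of_iterated_central_polynomials
    {H : Type u} [DivisionRing H] [FiniteDimensional (Subring.center H) H] (d : ℕ)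
    (hd : Module.finrank (Subring.center H) H = d)
    (n : ℕ) (hn : 1 ≤ n)
    {F : Type v} [DivisionRing F]
    (φ : IterPoly H n →+* F) (hφ : IsClassicalRightQuotient φ) :
    IsField (Subring.center F) ∧ Module.finrank (Subring.center F) F = d := by
  obtain ⟨h1, h2⟩ := iterNT H n
  have h := abstract_main (iterBasis H d hd n) φ hφ
  simpa using h
end

section
/- Let H be a division ring of finite dimension n over its center k, and assume k is infinite. Then the ring H[X] of polynomial functions on H is isomorphic, as a ring, to the iterated polynomial ring H_c[t₁,…,t_n] in n central variables over H. -/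
universe u v w x

/-! ### Auxiliary material for the proof -/

section Aux

variable {H : Type u} [DivisionRing H]

noncomputable instance (H : Type u) [Ring H] (n : ℕ) : Ring ((IterPolyAux H n).1) :=
  (IterPolyAux H n).2

/-- The Artin–Whaples lemma: if `b i` are linearly independent over the center and
`∑ i, a i * x * b i = 0` for all `x`, then all `a i` vanish. -/
theorem artin_whaples : ∀ (r : ℕ) (a b : Fin r → H),
    LinearIndependent (Subring.center H) b →
    (∀ x : H, ∑ i, a i * x * b i = 0) → ∀ i, a i = 0 := by
  intro r
  induction r with
  | zero => exact fun a b _ _ i => i.elim0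
  | succ m IH =>
    intro a b hb h
    have hbc : LinearIndependent (Subring.center H) (b ∘ Fin.castSucc) :=
      hb.comp _ (Fin.castSucc_injective m)
    by_cases h0 : a (Fin.last m) = 0
    · have h' : ∀ x : H, ∑ i : Fin m, a (Fin.castSucc i) * x * b (Fin.castSucc i) = 0 := by
        intro x
        have := h x
        rw [Fin.sum_univ_castSucc, h0, zero_mul, zero_mul, add_zero] at this
        exact this
      have := IH (a ∘ Fin.castSucc) (b ∘ Fin.castSucc) hbc h'
      intro i
      refine Fin.lastCases h0 (fun j => this j) i
    · exfalso
      set a' : Fin (m + 1) → H := fun i => (a (Fin.last m))⁻¹ * a i with ha'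
      have ha'last : a' (Fin.last m) = 1 := inv_mul_cancel₀ h0
      have h' : ∀ x : H, ∑ i, a' i * x * b i = 0 := by
        intro x
        have : (a (Fin.last m))⁻¹ * ∑ i, a i * x * b i = 0 := by rw [h x, mul_zero]
        rw [Finset.mul_sum] at this
        simpa [ha', mul_assoc] using this
      have hcomm : ∀ (i : Fin m) (y : H), a' (Fin.castSucc i) * y = y * a' (Fin.castSucc i) := by
        intro i y
        have key : ∀ x : H, ∑ j : Fin m,
            (a' (Fin.castSucc j) * y - y * a' (Fin.castSucc j)) * x * b (Fin.castSucc j) = 0 := by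
          intro x
          have h1 := h' (y * x)
          have h2 : y * ∑ i, a' i * x * b i = 0 := by rw [h' x, mul_zero]
          rw [Finset.mul_sum] at h2
          have h3 : ∑ i : Fin (m+1), (a' i * y - y * a' i) * x * b i = 0 := by
            have := sub_eq_zero.2 (h1.trans h2.symm)
            rw [← Finset.sum_sub_distrib] at this
            convert this using 2 with i
            noncomm_ring
          rw [Fin.sum_univ_castSucc, ha'last] at h3
          simpa using h3
        have := IH _ (b ∘ Fin.castSucc) hbc key i
        exact sub_eq_zero.1 this
      have hcen : ∀ i : Fin (m + 1), a' i ∈ Subring.center H := by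
        intro i
        refine Fin.lastCases ?_ (fun j => ?_) i
        · rw [ha'last]; exact Subring.one_mem _
        · exact Subring.mem_center_iff.2 fun y => (hcomm j y).symm
      set c : Fin (m + 1) → Subring.center H := fun i => ⟨a' i, hcen i⟩ with hc
      have hsum : ∑ i, c i • b i = 0 := by
        have := h' 1
        simp only [mul_one] at this
        simpa [hc, Subring.smul_def] using this
      have hz := Fintype.linearIndependent_iff.1 hb c hsum (Fin.last m)
      rw [hc] at hz
      have : a' (Fin.last m) = 0 := congrArg Subtype.val hz
      rw [ha'last] at this
      exact one_ne_zero this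

/-- Evaluation of an iterated polynomial at a tuple of central values. -/
noncomputable def iterEval : ∀ (m : ℕ), (Fin m → Subring.center H) → (IterPoly H m →+* H)
  | 0, _ => RingHom.id H
  | m + 1, v =>
    (Polynomial.eval₂RingHom' (iterEval m (v ∘ Fin.castSucc)) ((v (Fin.last m) : H))
      (fun a => Subring.mem_center_iff.1 (v (Fin.last m)).2 _) :
        Polynomial (IterPoly H m) →+* H)

theorem iterEval_succ (m : ℕ) (v : Fin (m+1) → Subring.center H) (p : Polynomial (IterPoly H m)) :
    iterEval (m+1) v p
      = Polynomial.eval₂ (iterEval m (v ∘ Fin.castSucc)) ((v (Fin.last m) : H)) p := rfl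

/-- Constants in the iterated polynomial ring. -/
noncomputable def constIter : ∀ m : ℕ, H →+* IterPoly H m
  | 0 => RingHom.id H
  | m + 1 => (Polynomial.C : IterPoly H m →+* Polynomial (IterPoly H m)).comp (constIter m)

/-- The variables of the iterated polynomial ring. -/
noncomputable def varIter : ∀ m : ℕ, Fin m → IterPoly H m
  | 0 => Fin.elim0
  | m + 1 => fun i =>
      Fin.lastCases ((Polynomial.X : Polynomial (IterPoly H m)) : IterPoly H (m+1))
        (fun j => (Polynomial.C (varIter m j) : Polynomial (IterPoly H m))) i

theorem iterEval_const : ∀ (m : ℕ) (v : Fin m → Subring.center H) (c : H),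
    iterEval m v (constIter m c) = c
  | 0, _, c => rfl
  | m + 1, v, c => by
    show Polynomial.eval₂ _ _ (Polynomial.C (constIter m c)) = c
    rw [Polynomial.eval₂_C]
    exact iterEval_const m _ c

theorem iterEval_var : ∀ (m : ℕ) (v : Fin m → Subring.center H) (i : Fin m),
    iterEval m v (varIter m i) = (v i : H)
  | 0, _, i => i.elim0
  | m + 1, v, i => by
    induction i using Fin.lastCases with
    | last =>
      erw [iterEval_succ]
      simp only [varIter, Fin.lastCases_last]
      erw [Fin.lastCases_last, Polynomial.eval₂_X]
    | cast j =>
      erw [iterEval_succ]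
      simp only [varIter, Fin.lastCases_castSucc]
      erw [Fin.lastCases_castSucc, Polynomial.eval₂_C, iterEval_var m _ j]
      rfl

/-- A polynomial over `H` vanishing at all central points is zero (center infinite). -/
theorem central_poly_zero [FiniteDimensional (Subring.center H) H]
    [Infinite (Subring.center H)] (q : Polynomial H)
    (h : ∀ c : Subring.center H, q.eval (c : H) = 0) : q = 0 := by
  set k := Subring.center H
  let b := Module.Free.chooseBasis k H
  set ι := Module.Free.ChooseBasisIndex k H
  refine Polynomial.ext fun i => ?_
  by_contra hne
  have key : ∀ j : ι, ∀ c : k, (∑ d ∈ Finset.range (q.natDegree + 1),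
      b.repr (q.coeff d) j * c ^ d) = 0 := by
    intro j c
    have he : q.eval (c : H) = ∑ d ∈ Finset.range (q.natDegree + 1), q.coeff d * (c : H) ^ d :=
      Polynomial.eval_eq_sum_range _
    have hsm : ∀ d : ℕ, q.coeff d * (c : H) ^ d = (c ^ d) • q.coeff d := by
      intro d
      rw [Subring.smul_def]
      push_cast
      exact (Subring.mem_center_iff.1 (c ^ d).2 (q.coeff d)).symm ▸
        (Subring.mem_center_iff.1 ((c : k) ^ d).2 (q.coeff d))
    have h0 : (b.repr (q.eval (c : H))) j = 0 := by rw [h c]; simp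
    rw [he] at h0
    rw [map_sum] at h0
    simp only [hsm, map_smul, Finsupp.coe_finset_sum, Finset.sum_apply, Finsupp.smul_apply,
      smul_eq_mul] at h0
    calc ∑ d ∈ Finset.range (q.natDegree + 1), b.repr (q.coeff d) j * c ^ d
        = ∑ d ∈ Finset.range (q.natDegree + 1), c ^ d * b.repr (q.coeff d) j := by
          refine Finset.sum_congr rfl fun d _ => mul_comm _ _
      _ = 0 := h0
  have hco : ∀ j : ι, b.repr (q.coeff i) j = 0 := by
    intro j
    set p : Polynomial k := ∑ d ∈ Finset.range (q.natDegree + 1),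
      Polynomial.C (b.repr (q.coeff d) j) * Polynomial.X ^ d with hp
    have hpe : ∀ c : k, p.eval c = 0 := by
      intro c
      rw [hp]
      simp only [Polynomial.eval_finset_sum, Polynomial.eval_mul, Polynomial.eval_C,
        Polynomial.eval_pow, Polynomial.eval_X]
      exact key j c
    have hp0 : p = 0 := by
      refine Polynomial.funext fun c => ?_
      rw [hpe c, Polynomial.eval_zero]
    by_cases hi : i < q.natDegree + 1
    · have : p.coeff i = b.repr (q.coeff i) j := by
        rw [hp, Polynomial.finset_sum_coeff]
        simp only [Polynomial.coeff_C_mul, Polynomial.coeff_X_pow, mul_ite, mul_one, mul_zero]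
        rw [Finset.sum_ite_eq _ i]
        simp [hi]
      rw [hp0] at this
      simpa using this.symm
    · exfalso
      exact hne (Polynomial.coeff_eq_zero_of_natDegree_lt (by omega))
  exact hne (by
    have : b.repr (q.coeff i) = 0 := Finsupp.ext fun j => hco j
    simpa using (b.repr).map_eq_zero_iff.1 (by exact this))

/-- An iterated polynomial vanishing at all central tuples is zero. -/
theorem iterEval_eq_zero [FiniteDimensional (Subring.center H) H]
    [Infinite (Subring.center H)] :
    ∀ (m : ℕ) (p : IterPoly H m), (∀ v : Fin m → Subring.center H, iterEval m v p = 0) → p = 0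
  | 0, p, h => h Fin.elim0
  | m + 1, p, h => by
    have hz : ∀ i, (p : Polynomial (IterPoly H m)).coeff i = 0 := by
      intro i
      refine iterEval_eq_zero m _ fun v' => ?_
      have hq : ∀ c : Subring.center H,
          ((p : Polynomial (IterPoly H m)).map (iterEval m v')).eval (c : H) = 0 := by
        intro c
        have := h (Fin.snoc v' c)
        erw [iterEval_succ] at this
        erw [← Polynomial.eval₂_eq_eval_map]
        have hcomp : (Fin.snoc v' c : Fin (m+1) → Subring.center H) ∘ Fin.castSucc = v' := by
          funext j; simp
        rw [hcomp] at this
        simpa using this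
      have hqz := central_poly_zero _ hq
      have := congrArg (fun q => Polynomial.coeff q i) hqz
      exact (Polynomial.coeff_map _ _).symm.trans (by simpa using this)
    show (p : Polynomial (IterPoly H m)) = 0
    exact Polynomial.ext fun i => by rw [hz i]; exact (Polynomial.coeff_zero i).symm

theorem const_mem (c : H) : Function.const H c ∈ polyFunRing H :=
  Subring.subset_closure (Or.inl ⟨c, rfl⟩)

theorem id_mem : (id : H → H) ∈ polyFunRing H :=
  Subring.subset_closure (Or.inr rfl)

/-- The `k`-linear map sending a tuple `a` to the map `x ↦ ∑ i, a i * x * b i`. -/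
noncomputable def sandwich (n : ℕ) (b : Fin n → H) :
    (Fin n → H) →ₗ[Subring.center H] (H →ₗ[Subring.center H] H) where
  toFun a :=
    { toFun := fun x => ∑ i, a i * x * b i
      map_add' := by
        intro x y
        rw [← Finset.sum_add_distrib]
        refine Finset.sum_congr rfl fun i _ => by noncomm_ring
      map_smul' := by
        intro c x
        simp only [RingHom.id_apply, Subring.smul_def, smul_eq_mul, Finset.mul_sum]
        refine Finset.sum_congr rfl fun i _ => ?_
        calc a i * ((c : H) * x) * b i = (a i * (c : H)) * x * b i := by noncomm_ring
          _ = ((c : H) * a i) * x * b i := by rw [Subring.mem_center_iff.1 c.2 (a i)]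
          _ = (c : H) * (a i * x * b i) := by noncomm_ring }
  map_add' := by
    intro a a'
    refine LinearMap.ext fun x => ?_
    show ∑ i, (a i + a' i) * x * b i = (∑ i, a i * x * b i) + ∑ i, a' i * x * b i
    rw [← Finset.sum_add_distrib]
    refine Finset.sum_congr rfl fun i _ => by noncomm_ring
  map_smul' := by
    intro c a
    refine LinearMap.ext fun x => ?_
    show ∑ i, (c • a) i * x * b i = c • ∑ i, a i * x * b i
    simp only [Pi.smul_apply, Subring.smul_def, smul_eq_mul, Finset.mul_sum]
    refine Finset.sum_congr rfl fun i _ => by noncomm_ring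

theorem sandwich_surjective [FiniteDimensional (Subring.center H) H] {n : ℕ}
    (b : Module.Basis (Fin n) (Subring.center H) H) :
    Function.Surjective (sandwich n b) := by
  have hinj : Function.Injective (sandwich n b) := by
    rw [injective_iff_map_eq_zero]
    intro a ha
    funext i
    refine artin_whaples n a b b.linearIndependent (fun x => ?_) i
    exact LinearMap.congr_fun ha x
  have hfr : Module.finrank (Subring.center H) H = n := by
    simpa using Module.finrank_eq_card_basis b
  have hrank : Module.finrank (Subring.center H) (Fin n → H) =
      Module.finrank (Subring.center H) (H →ₗ[Subring.center H] H) := by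
    rw [Module.finrank_linearMap, Module.finrank_pi_fintype]
    simp [hfr]
  exact (LinearMap.injective_iff_surjective_of_finrank_eq_finrank hrank).1 hinj

/-- Every central-linear endomorphism of `H` is a polynomial function. -/
theorem linearMap_mem [FiniteDimensional (Subring.center H) H]
    (f : H →ₗ[Subring.center H] H) : ⇑f ∈ polyFunRing H := by
  set n := Module.finrank (Subring.center H) H
  let b : Module.Basis (Fin n) (Subring.center H) H := Module.finBasis _ _
  obtain ⟨a, ha⟩ := sandwich_surjective b f
  have : ⇑f = ∑ i : Fin n,
      (Function.const H (a i) * id * Function.const H (b i) : H → H) := by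
    funext x
    have : f x = ∑ i, a i * x * b i := by rw [← ha]; rfl
    rw [this]
    simp [Function.const]
  rw [this]
  exact Subring.sum_mem _ fun i _ =>
    Subring.mul_mem _ (Subring.mul_mem _ (const_mem _) id_mem) (const_mem _)

/-- The coordinate function of a basis, as a central-linear endomorphism of `H`. -/
noncomputable def coordLin {ι : Type*} (b : Module.Basis ι (Subring.center H) H) (j : ι) :
    H →ₗ[Subring.center H] H where
  toFun x := (b.repr x j : H)
  map_add' := by intro x y; simp
  map_smul' := by
    intro c x
    show ((b.repr (c • x)) j : H) = c • ((b.repr x) j : H)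
    rw [map_smul]
    simp [Subring.smul_def]

end Aux

theorem polyFunRing_iso_iterated_central_polynomials
    {H : Type u} [DivisionRing H] [FiniteDimensional (Subring.center H) H] (n : ℕ)
    (hn : Module.finrank (Subring.center H) H = n)
    (hk : Infinite (Subring.center H)) :
    Nonempty (polyFunRing H ≃+* IterPoly H n) := by
  haveI := hk
  let b : Module.Basis (Fin n) (Subring.center H) H := Module.finBasisOfFinrankEq (Subring.center H) H hn
  let Φ : IterPoly H n →+* (H → H) :=
    Pi.ringHom (fun x => iterEval n (fun i => b.repr x i))
  have main : ∀ (m : ℕ) (hm : m ≤ n) (p : IterPoly H m),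
      (fun x : H => iterEval m (fun i => b.repr x (Fin.castLE hm i)) p) ∈ polyFunRing H := by
    intro m
    induction m with
    | zero =>
      intro hm p
      exact const_mem (iterEval 0 (fun i => i.elim0) p)
    | succ m IH =>
      intro hm p
      have hm' : m ≤ n := le_trans (Nat.le_succ m) hm
      refine Polynomial.induction_on
        (motive := fun q : Polynomial (IterPoly H m) =>
          (fun x : H => iterEval (m+1) (fun i => b.repr x (Fin.castLE hm i)) q) ∈ polyFunRing H)
        (p : Polynomial (IterPoly H m)) ?_ ?_ ?_
      · intro a
        show (fun x : H =>
            iterEval (m+1) (fun i => b.repr x (Fin.castLE hm i)) (Polynomial.C a)) ∈ polyFunRing H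
        have heq : (fun x : H =>
              iterEval (m+1) (fun i => b.repr x (Fin.castLE hm i)) (Polynomial.C a))
            = fun x : H => iterEval m (fun i => b.repr x (Fin.castLE hm' i)) a := by
          funext x
          erw [iterEval_succ]
          exact Polynomial.eval₂_C _ _
        rw [heq]
        exact IH hm' a
      · intro p q hp hq
        show (fun x : H =>
            iterEval (m+1) (fun i => b.repr x (Fin.castLE hm i)) (p + q)) ∈ polyFunRing H
        have heq : (fun x : H =>
              iterEval (m+1) (fun i => b.repr x (Fin.castLE hm i)) (p + q))
            = (fun x : H => iterEval (m+1) (fun i => b.repr x (Fin.castLE hm i)) p)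
              + fun x : H => iterEval (m+1) (fun i => b.repr x (Fin.castLE hm i)) q := by
          funext x
          exact map_add (iterEval (m+1) _) p q
        rw [heq]
        exact add_mem hp hq
      · intro d a hrec
        show (fun x : H => iterEval (m+1) (fun i => b.repr x (Fin.castLE hm i))
            (Polynomial.C a * Polynomial.X ^ (d + 1))) ∈ polyFunRing H
        have heq : (fun x : H => iterEval (m+1) (fun i => b.repr x (Fin.castLE hm i))
              (Polynomial.C a * Polynomial.X ^ (d + 1)))
            = (fun x : H => iterEval (m+1) (fun i => b.repr x (Fin.castLE hm i))
                (Polynomial.C a * Polynomial.X ^ d))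
              * ⇑(coordLin b (Fin.castLE hm (Fin.last m))) := by
          funext x
          show iterEval (m+1) _ (Polynomial.C a * Polynomial.X ^ (d + 1))
            = iterEval (m+1) _ (Polynomial.C a * Polynomial.X ^ d) * _
          erw [pow_succ, ← mul_assoc, map_mul]
          congr 1
          erw [iterEval_succ]
          exact (Polynomial.eval₂_X _ _)
        rw [heq]
        exact mul_mem hrec (linearMap_mem _)
  have hmem : ∀ p : IterPoly H n, Φ p ∈ polyFunRing H := fun p => main n le_rfl p
  have hle : polyFunRing H ≤ Φ.range := by
    rw [polyFunRing, Subring.closure_le]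
    rintro f (⟨c, rfl⟩ | rfl)
    · exact RingHom.mem_range.2 ⟨constIter n c, funext fun x => iterEval_const n _ c⟩
    · refine RingHom.mem_range.2 ⟨∑ i, varIter n i * constIter n (b i), funext fun x => ?_⟩
      show iterEval n (fun i => b.repr x i) (∑ i, varIter n i * constIter n (b i)) = x
      rw [map_sum]
      calc ∑ i, iterEval n (fun i => b.repr x i) (varIter n i * constIter n (b i))
          = ∑ i, (b.repr x i : H) * b i := by
            refine Finset.sum_congr rfl fun i _ => ?_
            rw [map_mul, iterEval_var, iterEval_const]
        _ = ∑ i, (b.repr x i) • b i := by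
            refine Finset.sum_congr rfl fun i _ => ?_
            rw [Subring.smul_def, smul_eq_mul]
        _ = x := b.sum_repr x
  have hrange : Φ.range = polyFunRing H := by
    refine le_antisymm ?_ hle
    rintro f hf
    obtain ⟨p, rfl⟩ := RingHom.mem_range.1 hf
    exact hmem p
  have hinj : Function.Injective Φ := by
    rw [injective_iff_map_eq_zero]
    intro p hp
    refine iterEval_eq_zero n p fun v => ?_
    have hx : Φ p (∑ j, v j • b j) = 0 := by rw [hp]; rfl
    have hrepr : (fun i => b.repr (∑ j, v j • b j) i) = v := by
      funext i
      exact congrFun (b.repr_sum_self v) i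
    have hx' : iterEval n (fun i => b.repr (∑ j, v j • b j) i) p = 0 := hx
    rwa [hrepr] at hx'
  have hinj' : Function.Injective Φ.rangeRestrict :=
    fun p q h => hinj (congrArg Subtype.val h)
  exact ⟨(RingEquiv.subringCongr hrange.symm).trans
    (RingEquiv.ofBijective Φ.rangeRestrict ⟨hinj', Φ.rangeRestrict_surjective⟩).symm⟩
end

section
/- Let ℍ denote the real quaternions and let R = MvPolynomial (Fin 4) ℝ. Define Φ : Quaternion R → (ℍ → ℍ) by sending p (a quaternion with components p₁, p₂, p₃, p₄ ∈ R) to the function a ↦ p₁(v(a)) + p₂(v(a))·i + p₃(v(a))·j + p₄(v(a))·k, where v(a) = (a.re, a.imI, a.imJ, a.imK) ∈ ℝ⁴ and pₗ(v(a)) denotes evaluation of the multivariate polynomial pₗ at v(a). Then Φ is an injective ring homomorphism (into the ring of functions ℍ → ℍ with pointwise operations) whose range is exactly the subring of ℍ → ℍ generated by the constant functions and the identity function. In particular, the ring ℍ[X] of polynomial functions on ℍ is isomorphic to Quaternion (MvPolynomial (Fin 4) ℝ). -/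
universe u v w x

/-- The imaginary unit `i` of the real quaternions. -/
noncomputable def qi : Quaternion ℝ := ⟨0, 1, 0, 0⟩

/-- The imaginary unit `j` of the real quaternions. -/
noncomputable def qj : Quaternion ℝ := ⟨0, 0, 1, 0⟩

/-- The imaginary unit `k` of the real quaternions. -/
noncomputable def qk : Quaternion ℝ := ⟨0, 0, 0, 1⟩

/-- The map sending a quaternion `p` with components in `MvPolynomial (Fin 4) ℝ` to the
polynomial function `a ↦ p₁(v a) + p₂(v a)·i + p₃(v a)·j + p₄(v a)·k` on the real
quaternions, where `v a = (a.re, a.imI, a.imJ, a.imK)`. -/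
noncomputable def Phi (p : Quaternion (MvPolynomial (Fin 4) ℝ)) :
    Quaternion ℝ → Quaternion ℝ := fun a =>
  ((MvPolynomial.eval ![a.re, a.imI, a.imJ, a.imK] p.re : ℝ) : Quaternion ℝ)
  + ((MvPolynomial.eval ![a.re, a.imI, a.imJ, a.imK] p.imI : ℝ) : Quaternion ℝ) * qi
  + ((MvPolynomial.eval ![a.re, a.imI, a.imJ, a.imK] p.imJ : ℝ) : Quaternion ℝ) * qj
  + ((MvPolynomial.eval ![a.re, a.imI, a.imJ, a.imK] p.imK : ℝ) : Quaternion ℝ) * qk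


section Aux

open MvPolynomial Quaternion

/-- Componentwise map of quaternions along a ring hom of commutative rings. -/
def quatMap {R S : Type*} [CommRing R] [CommRing S] (f : R →+* S) :
    Quaternion R →+* Quaternion S where
  toFun p := ⟨f p.re, f p.imI, f p.imJ, f p.imK⟩
  map_one' := by ext <;> simp
  map_mul' p q := by
    ext <;> simp [Quaternion.re_mul, Quaternion.imI_mul, Quaternion.imJ_mul,
      Quaternion.imK_mul]
    · erw [QuaternionAlgebra.re_mul]; simp <;> ring
    · erw [QuaternionAlgebra.imI_mul]; simp <;> ring
    · erw [QuaternionAlgebra.imJ_mul]; simp <;> ring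
    · erw [QuaternionAlgebra.imK_mul]; simp <;> ring
  map_zero' := by ext <;> simp
  map_add' p q := by ext <;> simp <;> rfl

@[simp] lemma quatMap_re {R S : Type*} [CommRing R] [CommRing S] (f : R →+* S)
    (p : Quaternion R) : (quatMap f p).re = f p.re := rfl
@[simp] lemma quatMap_imI {R S : Type*} [CommRing R] [CommRing S] (f : R →+* S)
    (p : Quaternion R) : (quatMap f p).imI = f p.imI := rfl
@[simp] lemma quatMap_imJ {R S : Type*} [CommRing R] [CommRing S] (f : R →+* S)
    (p : Quaternion R) : (quatMap f p).imJ = f p.imJ := rfl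
@[simp] lemma quatMap_imK {R S : Type*} [CommRing R] [CommRing S] (f : R →+* S)
    (p : Quaternion R) : (quatMap f p).imK = f p.imK := rfl
@[simp] lemma quatMap_mk {R S : Type*} [CommRing R] [CommRing S] (f : R →+* S)
    (a b c d : R) : quatMap f (⟨a, b, c, d⟩ : Quaternion R) = ⟨f a, f b, f c, f d⟩ := rfl

lemma quat_decomp (r x y z : ℝ) :
    (⟨r, x, y, z⟩ : Quaternion ℝ) = (r : Quaternion ℝ) + (x : Quaternion ℝ) * qi
      + (y : Quaternion ℝ) * qj + (z : Quaternion ℝ) * qk := by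
  ext <;> simp [Quaternion.re_mul, Quaternion.imI_mul, Quaternion.imJ_mul,
    Quaternion.imK_mul] <;> simp [qi, qj, qk]

/-- The evaluation vector of a real quaternion. -/
noncomputable def qv (a : Quaternion ℝ) : Fin 4 → ℝ := ![a.re, a.imI, a.imJ, a.imK]

/-- The ring hom version of `Phi`. -/
noncomputable def PsiHom : Quaternion (MvPolynomial (Fin 4) ℝ) →+* (Quaternion ℝ → Quaternion ℝ) :=
  Pi.ringHom fun a => quatMap (MvPolynomial.eval (qv a))

lemma PsiHom_eq_Phi : ⇑PsiHom = Phi := by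
  funext p a
  show quatMap (MvPolynomial.eval (qv a)) p = Phi p a
  rw [show quatMap (MvPolynomial.eval (qv a)) p =
    (⟨MvPolynomial.eval (qv a) p.re, MvPolynomial.eval (qv a) p.imI,
      MvPolynomial.eval (qv a) p.imJ, MvPolynomial.eval (qv a) p.imK⟩ : Quaternion ℝ) from rfl,
    quat_decomp]
  rfl

lemma re_extract (a : Quaternion ℝ) :
    ((a.re : ℝ) : Quaternion ℝ)
      = (((1/4 : ℝ) : Quaternion ℝ)) * (a - qi * a * qi - qj * a * qj - qk * a * qk) := by
  have h4 : a - qi * a * qi - qj * a * qj - qk * a * qk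
      = ((4 : ℝ) : Quaternion ℝ) * ((a.re : ℝ) : Quaternion ℝ) := by
    ext <;> simp [Quaternion.re_mul, Quaternion.imI_mul, Quaternion.imJ_mul,
      Quaternion.imK_mul, Quaternion.re_coe, Quaternion.imI_coe, Quaternion.imJ_coe,
      Quaternion.imK_coe] <;> simp [qi, qj, qk] <;> ring
  rw [h4, ← mul_assoc, ← Quaternion.coe_mul]
  norm_num

lemma neg_qi_mul_re (a : Quaternion ℝ) : ((-qi) * a).re = a.imI := by
  rw [Quaternion.re_mul, Quaternion.re_neg, Quaternion.imI_neg, Quaternion.imJ_neg,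
    Quaternion.imK_neg]; simp [qi]
lemma neg_qj_mul_re (a : Quaternion ℝ) : ((-qj) * a).re = a.imJ := by
  rw [Quaternion.re_mul, Quaternion.re_neg, Quaternion.imI_neg, Quaternion.imJ_neg,
    Quaternion.imK_neg]; simp [qj]
lemma neg_qk_mul_re (a : Quaternion ℝ) : ((-qk) * a).re = a.imK := by
  rw [Quaternion.re_mul, Quaternion.re_neg, Quaternion.imI_neg, Quaternion.imJ_neg,
    Quaternion.imK_neg]; simp [qk]

lemma const_mem_poly (c : Quaternion ℝ) :
    Function.const (Quaternion ℝ) c ∈ polyFunRing (Quaternion ℝ) :=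
  Subring.subset_closure (Or.inl ⟨c, rfl⟩)

lemma id_mem_poly : (id : Quaternion ℝ → Quaternion ℝ) ∈ polyFunRing (Quaternion ℝ) :=
  Subring.subset_closure (Or.inr rfl)

lemma reFun_mem {f : Quaternion ℝ → Quaternion ℝ} (hf : f ∈ polyFunRing (Quaternion ℝ)) :
    (fun a => (((f a).re : ℝ) : Quaternion ℝ)) ∈ polyFunRing (Quaternion ℝ) := by
  have : (fun a => (((f a).re : ℝ) : Quaternion ℝ))
      = Function.const (Quaternion ℝ) (((1/4 : ℝ) : Quaternion ℝ))
        * (f - Function.const _ qi * f * Function.const _ qi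
             - Function.const _ qj * f * Function.const _ qj
             - Function.const _ qk * f * Function.const _ qk) := by
    funext a
    exact re_extract (f a)
  rw [this]
  have hS := polyFunRing (Quaternion ℝ)
  refine Subring.mul_mem _ (const_mem_poly _) ?_
  refine Subring.sub_mem _ (Subring.sub_mem _ (Subring.sub_mem _ hf ?_) ?_) ?_ <;>
    exact Subring.mul_mem _ (Subring.mul_mem _ (const_mem_poly _) hf) (const_mem_poly _)

lemma compRe_mem : (fun a : Quaternion ℝ => ((a.re : ℝ) : Quaternion ℝ)) ∈
    polyFunRing (Quaternion ℝ) := reFun_mem id_mem_poly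

lemma compI_mem : (fun a : Quaternion ℝ => ((a.imI : ℝ) : Quaternion ℝ)) ∈
    polyFunRing (Quaternion ℝ) := by
  have h := reFun_mem (f := Function.const _ (-qi) * id)
    (Subring.mul_mem _ (const_mem_poly _) id_mem_poly)
  have he : (fun a => ((((Function.const (Quaternion ℝ) (-qi) * id : Quaternion ℝ → Quaternion ℝ) a).re : ℝ) : Quaternion ℝ))
      = fun a : Quaternion ℝ => ((a.imI : ℝ) : Quaternion ℝ) := by
    funext a
    rw [show (Function.const (Quaternion ℝ) (-qi) * id : Quaternion ℝ → Quaternion ℝ) a = -qi * a from rfl, neg_qi_mul_re]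
  rwa [he] at h

lemma compJ_mem : (fun a : Quaternion ℝ => ((a.imJ : ℝ) : Quaternion ℝ)) ∈
    polyFunRing (Quaternion ℝ) := by
  have h := reFun_mem (f := Function.const _ (-qj) * id)
    (Subring.mul_mem _ (const_mem_poly _) id_mem_poly)
  have he : (fun a => ((((Function.const (Quaternion ℝ) (-qj) * id : Quaternion ℝ → Quaternion ℝ) a).re : ℝ) : Quaternion ℝ))
      = fun a : Quaternion ℝ => ((a.imJ : ℝ) : Quaternion ℝ) := by
    funext a
    rw [show (Function.const (Quaternion ℝ) (-qj) * id : Quaternion ℝ → Quaternion ℝ) a = -qj * a from rfl, neg_qj_mul_re]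
  rwa [he] at h

lemma compK_mem : (fun a : Quaternion ℝ => ((a.imK : ℝ) : Quaternion ℝ)) ∈
    polyFunRing (Quaternion ℝ) := by
  have h := reFun_mem (f := Function.const _ (-qk) * id)
    (Subring.mul_mem _ (const_mem_poly _) id_mem_poly)
  have he : (fun a => ((((Function.const (Quaternion ℝ) (-qk) * id : Quaternion ℝ → Quaternion ℝ) a).re : ℝ) : Quaternion ℝ))
      = fun a : Quaternion ℝ => ((a.imK : ℝ) : Quaternion ℝ) := by
    funext a
    rw [show (Function.const (Quaternion ℝ) (-qk) * id : Quaternion ℝ → Quaternion ℝ) a = -qk * a from rfl, neg_qk_mul_re]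
  rwa [he] at h

noncomputable def qiR : Quaternion (MvPolynomial (Fin 4) ℝ) := ⟨0, 1, 0, 0⟩
noncomputable def qjR : Quaternion (MvPolynomial (Fin 4) ℝ) := ⟨0, 0, 1, 0⟩
noncomputable def qkR : Quaternion (MvPolynomial (Fin 4) ℝ) := ⟨0, 0, 0, 1⟩

lemma PsiHom_coe_mem (q : MvPolynomial (Fin 4) ℝ) :
    PsiHom ((q : Quaternion (MvPolynomial (Fin 4) ℝ))) ∈ polyFunRing (Quaternion ℝ) := by
  induction q using MvPolynomial.induction_on with
  | C c =>
      have : PsiHom ((MvPolynomial.C c : MvPolynomial (Fin 4) ℝ) : Quaternion (MvPolynomial (Fin 4) ℝ))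
          = Function.const (Quaternion ℝ) ((c : ℝ) : Quaternion ℝ) := by
        funext a
        show quatMap (MvPolynomial.eval (qv a)) _ = _
        ext <;> simp [Quaternion.re_coe]
      rw [this]; exact const_mem_poly _
  | add p q hp hq =>
      rw [Quaternion.coe_add, map_add]
      exact Subring.add_mem _ hp hq
  | mul_X p n hp =>
      rw [Quaternion.coe_mul, map_mul]
      refine Subring.mul_mem _ hp ?_
      have hX : PsiHom ((MvPolynomial.X n : MvPolynomial (Fin 4) ℝ) : Quaternion (MvPolynomial (Fin 4) ℝ))
          = fun a => ((qv a n : ℝ) : Quaternion ℝ) := by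
        funext a
        show quatMap (MvPolynomial.eval (qv a)) _ = _
        ext <;> simp
      rw [hX]
      fin_cases n
      · exact compRe_mem
      · exact compI_mem
      · exact compJ_mem
      · exact compK_mem

lemma PsiHom_injective : Function.Injective PsiHom := by
  intro p q h
  have key : ∀ (v : Fin 4 → ℝ),
      quatMap (MvPolynomial.eval v) p = quatMap (MvPolynomial.eval v) q := by
    intro v
    have ha := congrFun h (⟨v 0, v 1, v 2, v 3⟩ : Quaternion ℝ)
    have hv : qv (⟨v 0, v 1, v 2, v 3⟩ : Quaternion ℝ) = v := by
      funext i; fin_cases i <;> rfl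
    rw [← hv]; exact ha
  ext : 1
  · exact MvPolynomial.funext fun v => congrArg QuaternionAlgebra.re (key v)
  · exact MvPolynomial.funext fun v => congrArg QuaternionAlgebra.imI (key v)
  · exact MvPolynomial.funext fun v => congrArg QuaternionAlgebra.imJ (key v)
  · exact MvPolynomial.funext fun v => congrArg QuaternionAlgebra.imK (key v)

lemma PsiHom_range : PsiHom.range = polyFunRing (Quaternion ℝ) := by
  apply le_antisymm
  · rintro _ ⟨p, rfl⟩
    have hdec : p = ((p.re : MvPolynomial (Fin 4) ℝ) : Quaternion (MvPolynomial (Fin 4) ℝ))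
        + ((p.imI : MvPolynomial (Fin 4) ℝ) : Quaternion (MvPolynomial (Fin 4) ℝ)) * qiR
        + ((p.imJ : MvPolynomial (Fin 4) ℝ) : Quaternion (MvPolynomial (Fin 4) ℝ)) * qjR
        + ((p.imK : MvPolynomial (Fin 4) ℝ) : Quaternion (MvPolynomial (Fin 4) ℝ)) * qkR := by
      ext <;> simp [Quaternion.re_mul, Quaternion.imI_mul, Quaternion.imJ_mul,
        Quaternion.imK_mul] <;> simp [qiR, qjR, qkR]
    have hi : PsiHom qiR
        = Function.const (Quaternion ℝ) qi := by
      funext a; show quatMap (MvPolynomial.eval (qv a)) _ = _; ext <;> simp <;> simp [qi, qiR]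
    have hj : PsiHom qjR
        = Function.const (Quaternion ℝ) qj := by
      funext a; show quatMap (MvPolynomial.eval (qv a)) _ = _; ext <;> simp <;> simp [qj, qjR]
    have hk : PsiHom qkR
        = Function.const (Quaternion ℝ) qk := by
      funext a; show quatMap (MvPolynomial.eval (qv a)) _ = _; ext <;> simp <;> simp [qk, qkR]
    rw [hdec]
    simp only [map_add, map_mul, hi, hj, hk]
    refine Subring.add_mem _ (Subring.add_mem _ (Subring.add_mem _ (PsiHom_coe_mem _)
      ?_) ?_) ?_ <;>
      exact Subring.mul_mem _ (PsiHom_coe_mem _) (const_mem_poly _)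
  · rw [polyFunRing, Subring.closure_le]
    rintro f (⟨c, rfl⟩ | rfl)
    · refine ⟨⟨MvPolynomial.C c.re, MvPolynomial.C c.imI, MvPolynomial.C c.imJ,
        MvPolynomial.C c.imK⟩, ?_⟩
      funext a
      show quatMap (MvPolynomial.eval (qv a)) _ = _
      ext <;> simp
    · refine ⟨⟨MvPolynomial.X 0, MvPolynomial.X 1, MvPolynomial.X 2, MvPolynomial.X 3⟩, ?_⟩
      funext a
      show quatMap (MvPolynomial.eval (qv a)) _ = _
      ext <;> simp [qv]

end Aux

theorem quaternion_polyFunRing_iso_quaternion_mvPolynomial :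
    (∃ Ψ : Quaternion (MvPolynomial (Fin 4) ℝ) →+* (Quaternion ℝ → Quaternion ℝ),
      ⇑Ψ = Phi ∧ Function.Injective Ψ ∧ Ψ.range = polyFunRing (Quaternion ℝ)) ∧
    Nonempty (polyFunRing (Quaternion ℝ) ≃+* Quaternion (MvPolynomial (Fin 4) ℝ)) := by
  refine ⟨⟨PsiHom, PsiHom_eq_Phi, PsiHom_injective, PsiHom_range⟩, ?_⟩
  have e : Quaternion (MvPolynomial (Fin 4) ℝ) ≃+* PsiHom.range :=
    RingEquiv.ofBijective PsiHom.rangeRestrict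
      ⟨fun a b h => PsiHom_injective (congrArg Subtype.val h),
        PsiHom.rangeRestrict_surjective⟩
  exact ⟨(RingEquiv.subringCongr PsiHom_range.symm).trans e.symm⟩
end

section
/- Let H be a division ring of finite dimension over its center k, and assume k is infinite. Then the ring H[X] of polynomial functions on H has a classical right field of fractions: there exist a division ring F and an injective ring homomorphism φ : H[X] → F such that every element of F can be written as φ(a)·φ(b)⁻¹ with a, b ∈ H[X], b ≠ 0. -/
universe u v w x
set_option maxHeartbeats 1600000
set_option synthInstance.maxHeartbeats 400000

namespace Stmt8Aux

variable {H : Type u} [DivisionRing H]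

local notation "kk" => Subring.center H

theorem center_mul_comm (c : kk) (x : H) : (c : H) * x = x * c :=
  ((Subring.mem_center_iff.mp c.2) x).symm

theorem ksmul_def (c : kk) (x : H) : c • x = (c : H) * x := rfl

theorem const_mem (c : H) : Function.const H c ∈ polyFunRing H :=
  Subring.subset_closure (Or.inl ⟨c, rfl⟩)

theorem id_mem : (id : H → H) ∈ polyFunRing H :=
  Subring.subset_closure (Or.inr rfl)

theorem aw {ι : Type*} (a : ι → H) (s : Finset ι) :
    ∀ (c : ι → H), LinearIndependent kk (fun i : s => a (i : ι)) →
      (∀ x : H, ∑ i ∈ s, a i * x * c i = 0) → ∀ i ∈ s, c i = 0 := by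
  classical
  induction s using Finset.strongInduction with
  | _ s IH =>
    intro c ha h
    by_contra hcon
    push_neg at hcon
    obtain ⟨j, hj, hcj⟩ := hcon
    set c' : ι → H := fun i => c i * (c j)⁻¹ with hc'
    have hc'j : c' j = 1 := mul_inv_cancel₀ hcj
    have h' : ∀ x : H, ∑ i ∈ s, a i * x * c' i = 0 := by
      intro x
      calc ∑ i ∈ s, a i * x * c' i = (∑ i ∈ s, a i * x * c i) * (c j)⁻¹ := by
            rw [Finset.sum_mul]
            exact Finset.sum_congr rfl fun i _ => by
              exact (mul_assoc (a i * x) (c i) ((c j)⁻¹)).symm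
        _ = 0 := by rw [h x, zero_mul]
    have key : ∀ y : H, ∀ i ∈ s.erase j, c' i * y - y * c' i = 0 := by
      intro y
      have hemb : LinearIndependent kk (fun i : (s.erase j) => a (i : ι)) :=
        ha.comp (fun i : (s.erase j) => (⟨(i : ι), Finset.mem_of_mem_erase i.2⟩ : s))
          (fun i₁ i₂ h12 => by
            apply Subtype.ext
            have := congrArg Subtype.val h12
            simpa using this)
      refine IH (s.erase j) (Finset.erase_ssubset hj) (fun i => c' i * y - y * c' i) hemb ?_
      intro x
      have hsum : ∑ i ∈ s, a i * x * (c' i * y - y * c' i) = 0 := by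
        have e1 : ∑ i ∈ s, a i * x * (c' i * y) = 0 := by
          calc ∑ i ∈ s, a i * x * (c' i * y) = (∑ i ∈ s, a i * x * c' i) * y := by
                rw [Finset.sum_mul]
                exact Finset.sum_congr rfl fun i _ => (mul_assoc (a i * x) (c' i) y).symm
            _ = 0 := by rw [h' x, zero_mul]
        have e2 : ∑ i ∈ s, a i * x * (y * c' i) = 0 := by
          calc ∑ i ∈ s, a i * x * (y * c' i) = ∑ i ∈ s, a i * (x * y) * c' i :=
                Finset.sum_congr rfl fun i _ => by
                  rw [← mul_assoc (a i * x) y (c' i), mul_assoc (a i) x y]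
            _ = 0 := h' (x * y)
        calc ∑ i ∈ s, a i * x * (c' i * y - y * c' i)
            = ∑ i ∈ s, (a i * x * (c' i * y) - a i * x * (y * c' i)) :=
              Finset.sum_congr rfl fun i _ => by rw [mul_sub]
          _ = 0 := by rw [Finset.sum_sub_distrib, e1, e2, sub_zero]
      rw [Finset.sum_erase_eq_sub hj, hsum]
      simp [hc'j]
    have central : ∀ i ∈ s, c' i ∈ Subring.center H := by
      intro i hi
      by_cases hij : i = j
      · rw [hij, hc'j]; exact Subring.one_mem _
      · rw [Subring.mem_center_iff]
        intro y
        exact (sub_eq_zero.mp (key y i (Finset.mem_erase.mpr ⟨hij, hi⟩))).symm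
    have hone : ∑ i ∈ s, a i * c' i = 0 := by
      have := h' 1
      simpa using this
    have hsmul : ∑ i : s, (⟨c' i, central i i.2⟩ : kk) • a (i : ι) = 0 := by
      have e : ∀ i : s, (⟨c' (i : ι), central i i.2⟩ : kk) • a (i : ι) = a (i : ι) * c' (i : ι) := by
        intro i
        rw [ksmul_def]
        exact center_mul_comm ⟨c' (i : ι), central i i.2⟩ (a (i : ι))
      rw [Finset.sum_congr rfl fun i _ => e i]
      rw [Finset.sum_coe_sort s (fun i => a i * c' i)]
      exact hone
    have := Fintype.linearIndependent_iff.mp ha (fun i => ⟨c' i, central i i.2⟩) hsmul ⟨j, hj⟩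
    have : c' j = 0 := congrArg Subtype.val this
    rw [hc'j] at this
    exact one_ne_zero this

theorem center_move (l : kk) (u v : H) : (l : H) * (u * v) = u * ((l : H) * v) := by
  rw [← mul_assoc, center_mul_comm l u, mul_assoc]

/-- `x ↦ a * x * c` as a `kk`-linear map. -/
noncomputable def toLin (a c : H) : H →ₗ[kk] H where
  toFun x := a * x * c
  map_add' x y := by show a * (x + y) * c = a * x * c + a * y * c; rw [mul_add, add_mul]
  map_smul' l x := by
    show a * (l • x) * c = l • (a * x * c)
    rw [ksmul_def, ksmul_def, ← mul_assoc a (l : H) x, ← center_mul_comm l a,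
      mul_assoc (l : H) a x, mul_assoc (l : H) (a * x) c]

variable [FiniteDimensional (Subring.center H) H]

theorem toLin_indep (b : Module.Basis (Fin (Module.finrank kk H)) kk H) :
    LinearIndependent kk
      (fun p : Fin (Module.finrank kk H) × Fin (Module.finrank kk H) => toLin (b p.1) (b p.2)) := by
  rw [Fintype.linearIndependent_iff]
  intro g hg p
  have hind : LinearIndependent kk
      (fun i : (Finset.univ : Finset (Fin (Module.finrank kk H))) => b (i : Fin (Module.finrank kk H))) :=
    b.linearIndependent.comp _ Subtype.val_injective
  have hcz : ∀ i ∈ Finset.univ, (fun i => ∑ j, ((g (i, j) : H)) * b j) i = 0 := by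
    refine aw b Finset.univ _ hind ?_
    intro x
    have hx := LinearMap.congr_fun hg x
    simp only [LinearMap.zero_apply, LinearMap.coe_sum, Finset.sum_apply,
      LinearMap.smul_apply] at hx
    calc ∑ i ∈ Finset.univ, b i * x * ((fun i => ∑ j, ((g (i, j) : H)) * b j) i)
        = ∑ i, ∑ j, b i * x * ((g (i, j) : H) * b j) := by
          refine Finset.sum_congr rfl fun i _ => ?_
          rw [Finset.mul_sum]
      _ = ∑ q : Fin (Module.finrank kk H) × Fin (Module.finrank kk H),
            g q • (toLin (b q.1) (b q.2)) x := by
          rw [Fintype.sum_prod_type]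
          refine Finset.sum_congr rfl fun i _ => Finset.sum_congr rfl fun j _ => ?_
          show b i * x * ((g (i, j) : H) * b j) = g (i, j) • (b i * x * b j)
          rw [ksmul_def, center_move (g (i,j)) (b i * x) (b j), mul_assoc]
      _ = 0 := hx
  have h2 : ∑ j, g (p.1, j) • b j = 0 := by
    rw [← hcz p.1 (Finset.mem_univ _)]
    exact Finset.sum_congr rfl fun j _ => (ksmul_def _ _)
  exact Fintype.linearIndependent_iff.mp b.linearIndependent (fun j => g (p.1, j)) h2 p.2

theorem span_toLin (b : Module.Basis (Fin (Module.finrank kk H)) kk H) :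
    Submodule.span kk (Set.range
      (fun p : Fin (Module.finrank kk H) × Fin (Module.finrank kk H) =>
        toLin (b p.1) (b p.2))) = ⊤ := by
  refine (toLin_indep b).span_eq_top_of_card_eq_finrank' ?_
  simp [Module.finrank_linearMap]

theorem linear_mem (f : H →ₗ[kk] H) : ⇑f ∈ polyFunRing H := by
  classical
  have hb : f ∈ Submodule.span kk (Set.range
      (fun p : Fin (Module.finrank kk H) × Fin (Module.finrank kk H) =>
        toLin ((Module.finBasis kk H) p.1) ((Module.finBasis kk H) p.2))) := by
    rw [span_toLin (Module.finBasis kk H)]; trivial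
  induction hb using Submodule.span_induction with
  | mem g hg =>
      obtain ⟨p, rfl⟩ := hg
      have e : ⇑(toLin ((Module.finBasis kk H) p.1) ((Module.finBasis kk H) p.2))
          = Function.const H ((Module.finBasis kk H) p.1) * id
            * Function.const H ((Module.finBasis kk H) p.2) := rfl
      rw [e]
      exact Subring.mul_mem _ (Subring.mul_mem _ (const_mem _) id_mem) (const_mem _)
  | zero => exact Subring.zero_mem _
  | add x y hx hy px py => exact Subring.add_mem _ px py
  | smul l g hg pg =>
      have e : ⇑(l • g) = Function.const H (l : H) * ⇑g := by
        funext x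
        show l • g x = (l : H) * g x
        rw [ksmul_def]
      rw [e]
      exact Subring.mul_mem _ (const_mem _) pg

/-- coordinate functions are polynomial functions -/
theorem coord_mem (b : Module.Basis (Fin (Module.finrank kk H)) kk H) (i : Fin (Module.finrank kk H)) :
    (fun x : H => ((b.repr x i : kk) : H)) ∈ polyFunRing H := by
  let lsub : kk →ₗ[kk] H :=
    { toFun := fun c => (c : H)
      map_add' := fun _ _ => rfl
      map_smul' := fun _ _ => rfl }
  have := linear_mem (lsub.comp (b.coord i))
  have e : ⇑(lsub.comp (b.coord i)) = fun x : H => ((b.repr x i : kk) : H) := by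
    funext x
    simp [lsub, Module.Basis.coord_apply]
  rwa [e] at this

/-- Evaluation of a commutative polynomial at the coordinate functions. -/
noncomputable def Phi (b : Module.Basis (Fin (Module.finrank kk H)) kk H) :
    MvPolynomial (Fin (Module.finrank kk H)) kk →+* (H → H) :=
  (Pi.ringHom (fun x : H => ((Subring.center H).subtype).comp
      (Pi.evalRingHom (fun _ : H => kk) x))).comp
    (MvPolynomial.eval₂Hom (Pi.constRingHom H kk) (fun i => fun x : H => b.repr x i))

theorem Phi_apply (b : Module.Basis (Fin (Module.finrank kk H)) kk H)
    (p : MvPolynomial (Fin (Module.finrank kk H)) kk) (x : H) :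
    Phi b p x = ((MvPolynomial.eval (fun i => b.repr x i) p : kk) : H) := by
  have key : (Pi.evalRingHom (fun _ : H => kk) x).comp
      (MvPolynomial.eval₂Hom (Pi.constRingHom H kk) (fun i => fun x : H => b.repr x i))
      = MvPolynomial.eval₂Hom (RingHom.id kk) (fun i => b.repr x i) := by
    apply MvPolynomial.ringHom_ext <;> intro <;> simp
  have := RingHom.congr_fun key p
  show ((MvPolynomial.eval₂Hom (Pi.constRingHom H kk)
      (fun i => fun x : H => b.repr x i) p) x : H) = _
  rw [show (MvPolynomial.eval₂Hom (Pi.constRingHom H kk)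
      (fun i => fun x : H => b.repr x i) p) x
    = (Pi.evalRingHom (fun _ : H => kk) x).comp
      (MvPolynomial.eval₂Hom (Pi.constRingHom H kk) (fun i => fun x : H => b.repr x i)) p from rfl,
    key]
  rfl

theorem Phi_mem (b : Module.Basis (Fin (Module.finrank kk H)) kk H)
    (p : MvPolynomial (Fin (Module.finrank kk H)) kk) : Phi b p ∈ polyFunRing H := by
  induction p using MvPolynomial.induction_on with
  | C c =>
      have e : Phi b (MvPolynomial.C c) = Function.const H (c : H) := by
        funext x; rw [Phi_apply]; simp
      rw [e]; exact const_mem _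
  | add p q hp hq => rw [map_add]; exact Subring.add_mem _ hp hq
  | mul_X p i hp =>
      rw [map_mul]
      refine Subring.mul_mem _ hp ?_
      have e : Phi b (MvPolynomial.X i) = fun x : H => ((b.repr x i : kk) : H) := by
        funext x; rw [Phi_apply]; simp
      rw [e]; exact coord_mem b i

theorem Phi_comm (b : Module.Basis (Fin (Module.finrank kk H)) kk H)
    (p : MvPolynomial (Fin (Module.finrank kk H)) kk) (f : H → H) :
    f * Phi b p = Phi b p * f := by
  funext x
  show f x * Phi b p x = Phi b p x * f x
  rw [Phi_apply]
  exact (center_mul_comm _ (f x)).symm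

theorem const_rep (b : Module.Basis (Fin (Module.finrank kk H)) kk H) (cH : H) :
    Function.const H cH
      = ∑ i, Phi b (MvPolynomial.C (b.repr cH i)) * Function.const H (b i) := by
  funext x
  rw [Finset.sum_apply]
  have e : ∀ i, (Phi b (MvPolynomial.C (b.repr cH i)) * Function.const H (b i)) x
      = (b.repr cH i) • b i := by
    intro i
    show Phi b (MvPolynomial.C (b.repr cH i)) x * b i = _
    rw [Phi_apply, ksmul_def]
    simp
  rw [Finset.sum_congr rfl fun i _ => e i]
  exact (b.sum_repr cH).symm

theorem id_rep (b : Module.Basis (Fin (Module.finrank kk H)) kk H) :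
    (id : H → H) = ∑ i, Phi b (MvPolynomial.X i) * Function.const H (b i) := by
  funext x
  rw [Finset.sum_apply]
  have e : ∀ i, (Phi b (MvPolynomial.X i) * Function.const H (b i)) x = (b.repr x i) • b i := by
    intro i
    show Phi b (MvPolynomial.X i) x * b i = _
    rw [Phi_apply, ksmul_def]
    simp
  rw [Finset.sum_congr rfl fun i _ => e i]
  exact (b.sum_repr x).symm


theorem rep_val (b : Module.Basis (Fin (Module.finrank kk H)) kk H)
    (q : Fin (Module.finrank kk H) → MvPolynomial (Fin (Module.finrank kk H)) kk) (x : H) :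
    (∑ i, Phi b (q i) * Function.const H (b i)) x
      = b.equivFun.symm (fun i => MvPolynomial.eval (b.equivFun x) (q i)) := by
  rw [Finset.sum_apply, Module.Basis.equivFun_symm_apply]
  refine Finset.sum_congr rfl fun i _ => ?_
  show Phi b (q i) x * b i = _
  have e : (fun j => b.repr x j) = b.equivFun x := by
    funext j; exact (congrFun (b.equivFun_apply x) j).symm
  rw [Phi_apply, ksmul_def, e]

theorem mem_rep (b : Module.Basis (Fin (Module.finrank kk H)) kk H) {f : H → H}
    (hf : f ∈ polyFunRing H) :
    ∃ q : Fin (Module.finrank kk H) → MvPolynomial (Fin (Module.finrank kk H)) kk,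
      f = ∑ i, Phi b (q i) * Function.const H (b i) := by
  classical
  have hf' : f ∈ Subring.closure ({g | ∃ c : H, g = Function.const H c} ∪ {id}) := hf
  clear hf
  induction hf' using Subring.closure_induction with
  | mem g hg =>
      rcases hg with hgc | hgi
      · obtain ⟨c, rfl⟩ := hgc
        exact ⟨fun i => MvPolynomial.C (b.repr c i), const_rep b c⟩
      · refine ⟨fun i => MvPolynomial.X i, ?_⟩
        rw [Set.mem_singleton_iff.mp hgi]
        exact id_rep b
  | zero => exact ⟨0, by simp⟩
  | one =>
      refine ⟨fun i => MvPolynomial.C (b.repr 1 i), ?_⟩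
      have : (1 : H → H) = Function.const H (1 : H) := rfl
      rw [this]
      exact const_rep b 1
  | add x y hx hy px py =>
      obtain ⟨q, hq⟩ := px; obtain ⟨r, hr⟩ := py
      refine ⟨q + r, ?_⟩
      rw [hq, hr, ← Finset.sum_add_distrib]
      exact Finset.sum_congr rfl fun i _ => by rw [Pi.add_apply, map_add, add_mul]
  | neg x hx px =>
      obtain ⟨q, hq⟩ := px
      refine ⟨-q, ?_⟩
      rw [hq, ← Finset.sum_neg_distrib]
      exact Finset.sum_congr rfl fun i _ => by rw [Pi.neg_apply, map_neg, neg_mul]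
  | mul x y hx hy px py =>
      obtain ⟨q, hq⟩ := px; obtain ⟨r, hr⟩ := py
      refine ⟨fun l => ∑ i, ∑ j, q i * r j * MvPolynomial.C (b.repr ((b i) * (b j)) l), ?_⟩
      rw [hq, hr, Finset.sum_mul_sum]
      have step : ∀ i j,
          (Phi b (q i) * Function.const H (b i)) * (Phi b (r j) * Function.const H (b j))
          = ∑ l, Phi b (q i * r j * MvPolynomial.C (b.repr ((b i) * (b j)) l))
              * Function.const H (b l) := by
        intro i j
        have e1 : (Phi b (q i) * Function.const H (b i)) * (Phi b (r j) * Function.const H (b j))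
            = Phi b (q i * r j) * Function.const H ((b i) * (b j)) := by
          rw [map_mul, mul_assoc (Phi b (q i)) (Function.const H (b i)),
            ← mul_assoc (Function.const H (b i)) (Phi b (r j)),
            Phi_comm b (r j) (Function.const H (b i)),
            mul_assoc (Phi b (r j)) (Function.const H (b i)),
            ← mul_assoc (Phi b (q i)) (Phi b (r j))]
          rfl
        rw [e1, const_rep b ((b i) * (b j)), Finset.mul_sum]
        exact Finset.sum_congr rfl fun l _ => by rw [← mul_assoc, ← map_mul]
      rw [Finset.sum_congr rfl fun i _ => Finset.sum_congr rfl fun j _ => step i j]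
      rw [Finset.sum_congr rfl fun i (_ : i ∈ Finset.univ) => Finset.sum_comm]
      rw [Finset.sum_comm]
      refine Finset.sum_congr rfl fun l _ => ?_
      rw [map_sum, Finset.sum_mul]
      exact Finset.sum_congr rfl fun i _ => by rw [map_sum, Finset.sum_mul]

theorem rep_unique [Infinite kk] (b : Module.Basis (Fin (Module.finrank kk H)) kk H)
    (q : Fin (Module.finrank kk H) → MvPolynomial (Fin (Module.finrank kk H)) kk)
    (h : ∑ i, Phi b (q i) * Function.const H (b i) = 0) : ∀ i, q i = 0 := by
  intro i
  have hval : ∀ v : Fin (Module.finrank kk H) → kk, MvPolynomial.eval v (q i) = 0 := by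
    intro v
    have hx := congrFun h (b.equivFun.symm v)
    rw [rep_val] at hx
    rw [b.equivFun.apply_symm_apply] at hx
    have h0 : (fun j => MvPolynomial.eval v (q j)) = (0 : Fin (Module.finrank kk H) → kk) := by
      apply b.equivFun.symm.injective
      rw [map_zero]
      exact hx
    exact congrFun h0 i
  exact MvPolynomial.funext (fun v => by rw [hval v, map_zero])

theorem strip {R : Type*} [CommRing R] {M : Type*} [AddCommGroup M] [Module R M]
    {L : M →ₗ[R] M} (hL : Function.Injective L) :
    ∀ (n : ℕ) (P : Polynomial R), P.natDegree ≤ n → P ≠ 0 → Polynomial.aeval L P = 0 →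
      ∃ Q : Polynomial R, Polynomial.aeval L Q = 0 ∧ Q.coeff 0 ≠ 0 := by
  intro n
  induction n with
  | zero =>
      intro P hdeg hP h0
      refine ⟨P, h0, ?_⟩
      have hC := Polynomial.eq_C_of_natDegree_le_zero hdeg
      intro hc0
      exact hP (by rw [hC, hc0, map_zero])
  | succ n IH =>
      intro P hdeg hP h0
      by_cases hc : P.coeff 0 = 0
      · have hfac : P = Polynomial.X * P.divX := by
          conv_lhs => rw [← Polynomial.X_mul_divX_add P]
          rw [hc, map_zero, add_zero]
        have hdvx : Polynomial.aeval L P.divX = 0 := by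
          rw [hfac, map_mul, Polynomial.aeval_X] at h0
          ext x
          apply hL
          have hthis := LinearMap.congr_fun h0 x
          rw [Module.End.mul_apply] at hthis
          simp only [LinearMap.zero_apply] at hthis ⊢
          rw [hthis, map_zero]
        have hne : P.divX ≠ 0 := by
          intro h
          exact hP (by rw [hfac, h, mul_zero])
        refine IH P.divX ?_ hne hdvx
        have := Polynomial.natDegree_divX_eq_natDegree_tsub_one (p := P)
        omega
      · exact ⟨P, h0, hc⟩

theorem subring_nontrivial : Nontrivial (polyFunRing H) := by
  refine ⟨⟨0, 1, ?_⟩⟩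
  intro h01
  have : ((0 : polyFunRing H) : H → H) = ((1 : polyFunRing H) : H → H) := by rw [h01]
  have := congrFun this 1
  exact zero_ne_one this

theorem domain_aux [Infinite kk] (b : Module.Basis (Fin (Module.finrank kk H)) kk H) {f g : H → H}
    (hf : f ∈ polyFunRing H) (hg : g ∈ polyFunRing H) (hfg : f * g = 0) :
    f = 0 ∨ g = 0 := by
  by_contra hcon
  push_neg at hcon
  obtain ⟨hf0, hg0⟩ := hcon
  obtain ⟨q, hq⟩ := mem_rep b hf
  obtain ⟨r, hr⟩ := mem_rep b hg
  have hqi : ∃ i, q i ≠ 0 := by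
    by_contra hq0; push_neg at hq0
    refine hf0 ?_
    rw [hq, Finset.sum_congr rfl fun i _ => by rw [hq0 i, map_zero, zero_mul]]
    simp
  have hrj : ∃ j, r j ≠ 0 := by
    by_contra hr0; push_neg at hr0
    refine hg0 ?_
    rw [hr, Finset.sum_congr rfl fun j _ => by rw [hr0 j, map_zero, zero_mul]]
    simp
  obtain ⟨i, hi⟩ := hqi
  obtain ⟨j, hj⟩ := hrj
  have hne : q i * r j ≠ 0 := mul_ne_zero hi hj
  have hv : ∃ v, MvPolynomial.eval v (q i * r j) ≠ 0 := by
    by_contra hvv; push_neg at hvv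
    exact hne (MvPolynomial.funext fun v => by rw [hvv v, map_zero])
  obtain ⟨v, hv⟩ := hv
  rw [map_mul] at hv
  have hfx : f (b.equivFun.symm v) ≠ 0 := by
    rw [hq, rep_val, b.equivFun.apply_symm_apply]
    intro h0
    have hw := (LinearEquiv.map_eq_zero_iff b.equivFun.symm).mp h0
    exact (mul_ne_zero_iff.mp hv).1 (congrFun hw i)
  have hgx : g (b.equivFun.symm v) ≠ 0 := by
    rw [hr, rep_val, b.equivFun.apply_symm_apply]
    intro h0
    have hw := (LinearEquiv.map_eq_zero_iff b.equivFun.symm).mp h0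
    exact (mul_ne_zero_iff.mp hv).2 (congrFun hw j)
  have := congrFun hfg (b.equivFun.symm v)
  rcases mul_eq_zero.mp this with h | h
  · exact hfx h
  · exact hgx h

theorem subring_noZeroDivisors [Infinite kk] : NoZeroDivisors (polyFunRing H) := by
  constructor
  intro a b hab
  have h : (a : H → H) * (b : H → H) = 0 := by
    have := congrArg (Subtype.val) hab
    exact this
  rcases domain_aux (Module.finBasis kk H) a.2 b.2 h with h | h
  · exact Or.inl (Subtype.ext h)
  · exact Or.inr (Subtype.ext h)

theorem Phi_inj [Infinite kk] (b : Module.Basis (Fin (Module.finrank kk H)) kk H)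
    {p : MvPolynomial (Fin (Module.finrank kk H)) kk} (hp : Phi b p = 0) : p = 0 := by
  refine MvPolynomial.funext fun v => ?_
  rw [map_zero]
  have hx := congrFun hp (b.equivFun.symm v)
  rw [Phi_apply] at hx
  have e : (fun i => b.repr (b.equivFun.symm v) i) = v := by
    have h1 : ⇑(b.repr (b.equivFun.symm v)) = b.equivFun (b.equivFun.symm v) :=
      (b.equivFun_apply _).symm
    rw [show (fun i => b.repr (b.equivFun.symm v) i) = ⇑(b.repr (b.equivFun.symm v)) from rfl,
      h1, b.equivFun.apply_symm_apply]
  rw [e] at hx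
  exact Subtype.ext hx

noncomputable def PhiS : MvPolynomial (Fin (Module.finrank kk H)) kk →+* (polyFunRing H) :=
  (Phi (Module.finBasis kk H)).codRestrict _ (Phi_mem _)

noncomputable local instance algPFR :
    Algebra (MvPolynomial (Fin (Module.finrank kk H)) kk) (polyFunRing H) :=
  (PhiS (H := H)).toAlgebra'
    (fun p x => Subtype.ext ((Phi_comm (Module.finBasis kk H) p x.1).symm))

theorem algebraMap_eq : (algebraMap (MvPolynomial (Fin (Module.finrank kk H)) kk)
    (polyFunRing H)) = PhiS (H := H) := rfl

theorem PhiS_inj [Infinite kk] {p : MvPolynomial (Fin (Module.finrank kk H)) kk}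
    (hp : PhiS (H := H) p = 0) : p = 0 :=
  Phi_inj (Module.finBasis kk H) (congrArg Subtype.val hp)

theorem smul_coe (p : MvPolynomial (Fin (Module.finrank kk H)) kk) (x : polyFunRing H) :
    ((p • x : polyFunRing H) : H → H) = Phi (Module.finBasis kk H) p * (x : H → H) := by
  rw [Algebra.smul_def, algebraMap_eq]
  rfl

noncomputable def SB [Infinite kk] : Module.Basis (Fin (Module.finrank kk H))
    (MvPolynomial (Fin (Module.finrank kk H)) kk) (polyFunRing H) := by
  refine Module.Basis.mk (v := fun i => ⟨Function.const H ((Module.finBasis kk H) i),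
    const_mem _⟩) ?_ ?_
  · rw [Fintype.linearIndependent_iff]
    intro g hg i
    have hval : (∑ j, Phi (Module.finBasis kk H) (g j)
        * Function.const H ((Module.finBasis kk H) j)) = 0 := by
      have h2 := congrArg Subtype.val hg
      rw [AddSubmonoidClass.coe_finset_sum] at h2
      refine Eq.trans ?_ h2
      exact (Finset.sum_congr rfl fun j _ => smul_coe (g j)
        ⟨Function.const H ((Module.finBasis kk H) j), const_mem _⟩).symm
    exact rep_unique (Module.finBasis kk H) g hval i
  · intro x _
    obtain ⟨q, hq⟩ := mem_rep (Module.finBasis kk H) x.2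
    have hx : x = ∑ i, q i • (⟨Function.const H ((Module.finBasis kk H) i), const_mem _⟩ :
        polyFunRing H) := by
      apply Subtype.ext
      rw [AddSubmonoidClass.coe_finset_sum]
      rw [Finset.sum_congr rfl fun j _ => smul_coe (q j)
        ⟨Function.const H ((Module.finBasis kk H) j), const_mem _⟩]
      exact hq
    rw [hx]
    exact Submodule.sum_mem _ fun i _ => Submodule.smul_mem _ _
      (Submodule.subset_span ⟨i, rfl⟩)

noncomputable local instance freePFR [Infinite kk] :
    Module.Free (MvPolynomial (Fin (Module.finrank kk H)) kk) (polyFunRing H) :=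
  Module.Free.of_basis (SB (H := H))

noncomputable local instance finitePFR [Infinite kk] :
    Module.Finite (MvPolynomial (Fin (Module.finrank kk H)) kk) (polyFunRing H) :=
  Module.Finite.of_basis (SB (H := H))

theorem exists_central_mul [FiniteDimensional (Subring.center H) H] [Infinite kk] (s : polyFunRing H) (hs : s ≠ 0) :
    ∃ t c : polyFunRing H, s * t = c ∧ t * s = c ∧ c ≠ 0 ∧
      ∀ u : polyFunRing H, c * u = u * c := by
  haveI := subring_nontrivial (H := H)
  haveI := subring_noZeroDivisors (H := H)
  set L := LinearMap.mulLeft (MvPolynomial (Fin (Module.finrank kk H)) kk) s with hLdef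
  have hLinj : Function.Injective L := by
    intro x y hxy
    simp only [hLdef, LinearMap.mulLeft_apply] at hxy
    exact mul_left_cancel₀ hs hxy
  have hchar := LinearMap.aeval_self_charpoly L
  have hne : L.charpoly ≠ 0 := (L.charpoly_monic).ne_zero
  obtain ⟨Q, hQ0, hQc⟩ := strip hLinj L.charpoly.natDegree L.charpoly le_rfl hne hchar
  rw [Polynomial.aeval_eq_sum_range] at hQ0
  have h1 := LinearMap.congr_fun hQ0 (1 : polyFunRing H)
  simp only [hLdef, LinearMap.coe_sum, Finset.sum_apply, LinearMap.smul_apply,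
    LinearMap.zero_apply, LinearMap.pow_mulLeft, LinearMap.mulLeft_apply, mul_one,
    Module.End.one_apply] at h1
  rw [Finset.sum_range_succ'] at h1
  rw [pow_zero] at h1
  have hkey : ∑ i ∈ Finset.range Q.natDegree, Q.coeff (i + 1) • s ^ (i + 1)
      = -(Q.coeff 0 • (1 : polyFunRing H)) := by
    exact eq_neg_of_add_eq_zero_left h1
  refine ⟨-(∑ i ∈ Finset.range Q.natDegree, Q.coeff (i + 1) • s ^ i),
    Q.coeff 0 • (1 : polyFunRing H), ?_, ?_, ?_, ?_⟩
  case _ =>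
    rw [mul_neg, Finset.mul_sum]
    rw [Finset.sum_congr rfl fun i _ => ?_]
    · rw [hkey, neg_neg]
    · rw [mul_smul_comm, ← pow_succ']
  case _ =>
    apply mul_left_cancel₀ hs
    rw [← mul_assoc]
    have hst : s * -(∑ i ∈ Finset.range Q.natDegree, Q.coeff (i + 1) • s ^ i)
        = Q.coeff 0 • (1 : polyFunRing H) := by
      rw [mul_neg, Finset.mul_sum]
      rw [Finset.sum_congr rfl fun i _ => ?_]
      · rw [hkey, neg_neg]
      · rw [mul_smul_comm, ← pow_succ']
    rw [hst]
    have hc : Q.coeff 0 • (1 : polyFunRing H) = PhiS (H := H) (Q.coeff 0) := by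
      rw [← algebraMap_eq, Algebra.algebraMap_eq_smul_one]
    rw [hc]
    apply Subtype.ext
    exact (Phi_comm (Module.finBasis kk H) (Q.coeff 0) (s : H → H)).symm
  case _ =>
    intro h0
    have hc : Q.coeff 0 • (1 : polyFunRing H) = PhiS (H := H) (Q.coeff 0) := by
      rw [← algebraMap_eq, Algebra.algebraMap_eq_smul_one]
    rw [hc] at h0
    exact hQc (PhiS_inj h0)
  case _ =>
    intro u
    have hc : Q.coeff 0 • (1 : polyFunRing H) = PhiS (H := H) (Q.coeff 0) := by
      rw [← algebraMap_eq, Algebra.algebraMap_eq_smul_one]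
    rw [hc]
    apply Subtype.ext
    exact (Phi_comm (Module.finBasis kk H) (Q.coeff 0) (u : H → H)).symm

theorem main [FiniteDimensional (Subring.center H) H] [Infinite kk] :
    ∃ (F : Type u) (instF : DivisionRing F),
      letI := instF
      ∃ φ : polyFunRing H →+* F, IsClassicalRightQuotient φ := by
  classical
  haveI := subring_nontrivial (H := H)
  haveI := subring_noZeroDivisors (H := H)
  have ore : ∀ (r : polyFunRing H) (s : nonZeroDivisors (polyFunRing H)),
      ∃ (r' : polyFunRing H) (s' : nonZeroDivisors (polyFunRing H)),
        (s' : polyFunRing H) * r = r' * (s : polyFunRing H) := by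
    intro r s
    obtain ⟨t, c, hst, hts, hc0, hcent⟩ := exists_central_mul (s : polyFunRing H)
      (nonZeroDivisors.ne_zero s.2)
    refine ⟨r * t, ⟨c, mem_nonZeroDivisors_of_ne_zero hc0⟩, ?_⟩
    show c * r = r * t * (s : polyFunRing H)
    rw [hcent r, mul_assoc, hts]
  letI : OreLocalization.OreSet (nonZeroDivisors (polyFunRing H)) :=
    OreLocalization.oreSetOfNoZeroDivisors (fun r s => (ore r s).choose)
      (fun r s => (ore r s).choose_spec.choose)
      (fun r s => (ore r s).choose_spec.choose_spec)
  have hle : nonZeroDivisors (polyFunRing H) ≤ nonZeroDivisorsLeft (polyFunRing H) := by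
    intro x hx y hxy
    rcases mul_eq_zero.mp hxy with h | h
    · exact absurd h (nonZeroDivisors.ne_zero hx)
    · exact h
  have hinj : Function.Injective
      (OreLocalization.numeratorRingHom :
        polyFunRing H →+* OreLocalization (nonZeroDivisors (polyFunRing H)) (polyFunRing H)) :=
    fun a b hab => OreLocalization.numeratorHom_inj hle hab
  refine ⟨OreLocalization (nonZeroDivisors (polyFunRing H)) (polyFunRing H), inferInstance,
    OreLocalization.numeratorRingHom, hinj, ?_⟩
  intro x
  induction x using OreLocalization.ind with
  | _ r s =>
    obtain ⟨t, c, hst, hts, hc0, hcent⟩ := exists_central_mul (s : polyFunRing H)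
      (nonZeroDivisors.ne_zero s.2)
    refine ⟨t * r, c, hc0, ?_⟩
    set φ := (OreLocalization.numeratorRingHom :
      polyFunRing H →+* OreLocalization (nonZeroDivisors (polyFunRing H)) (polyFunRing H)) with hφdef
    have h1 : φ (s : polyFunRing H) * (r /ₒ s) = φ r := by
      show OreLocalization.numeratorHom (s : polyFunRing H) * (r /ₒ s)
        = OreLocalization.numeratorHom r
      rw [OreLocalization.numeratorHom_apply, OreLocalization.numeratorHom_apply]
      exact OreLocalization.mul_cancel
    have hφs : φ (s : polyFunRing H) ≠ 0 := fun h =>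
      (nonZeroDivisors.ne_zero s.2) (hinj (by rw [h, map_zero]))
    have hφc : φ c ≠ 0 := fun h => hc0 (hinj (by rw [h, map_zero]))
    have hx : (r /ₒ s) = (φ (s : polyFunRing H))⁻¹ * φ r := by
      rw [← h1, inv_mul_cancel_left₀ hφs]
    have hinvs : (φ (s : polyFunRing H))⁻¹ = φ t * (φ c)⁻¹ :=
      inv_eq_of_mul_eq_one_right (by rw [← mul_assoc, ← map_mul, hst, mul_inv_cancel₀ hφc])
    have hcomm : Commute (φ c) (φ r) := by
      show φ c * φ r = φ r * φ c
      rw [← map_mul, ← map_mul, hcent r]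
    rw [hx, hinvs, mul_assoc, (hcomm.inv_left₀).eq, ← mul_assoc, ← map_mul]


end Stmt8Aux

theorem polyFunRing_has_classical_right_field_of_fractions
    {H : Type u} [DivisionRing H] [FiniteDimensional (Subring.center H) H]
    (hk : Infinite (Subring.center H)) :
    ∃ (F : Type u) (instF : DivisionRing F),
      letI := instF
      ∃ φ : polyFunRing H →+* F, IsClassicalRightQuotient φ := by
  haveI := hk
  exact Stmt8Aux.main
end
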